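/- arXiv:2206.11506 — 6 statements merged into one kernel-verified Lean document; each statement's English description precedes it below -/
import Mathlib

section
/- For all indices j ≠ k in {0,…,N−1}, the expectation over θ drawn uniformly from [−π, π] satisfies E_θ[x_j(θ)·x_k(θ)] = 0. -/
open Real Finset

/-- The random vector `x(θ) ∈ ℝ^N`: with `n = ⌈log₂ N⌉` and `ω_j = 2^j`,
`x_i(θ) = √(2^n/N) ∏_{j=1}^n cos(ω_j θ)^{1−b_{ij}} sin(ω_j θ)^{b_{ij}}`, where
`b_{i1}…b_{in}` is the `n`-bit binary representation of `i` (`b_{i1}` most significant). -/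
noncomputable def xvec (N : ℕ) (θ : ℝ) (i : Fin N) : ℝ :=
  Real.sqrt ((2 : ℝ) ^ (Nat.clog 2 N) / N) *
    ∏ j ∈ Finset.Icc 1 (Nat.clog 2 N),
      if i.val / 2 ^ (Nat.clog 2 N - j) % 2 = 1
      then Real.sin ((2 : ℝ) ^ j * θ)
      else Real.cos ((2 : ℝ) ^ j * θ)

noncomputable def uu (b b' : Bool) (ε : ℤ) : ℂ :=
  if b = b' then (if ε = 0 then 1/2 else if b then -(1/4) else 1/4)
  else (if ε = 0 then 0 else -(ε : ℂ) * Complex.I / 4)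

lemma sum_three (f : ℤ → ℂ) :
    ∑ ε ∈ ({-1, 0, 1} : Finset ℤ), f ε = f (-1) + f 0 + f 1 := by
  rw [show ({-1, 0, 1} : Finset ℤ) = insert (-1) (insert 0 {1}) from rfl,
    Finset.sum_insert (by decide), Finset.sum_insert (by decide), Finset.sum_singleton]
  ring

lemma pair_core (b b' : Bool) (E F : ℂ) (h : E * F = 1) :
    ((if b then (F - E) * Complex.I / 2 else (E + F) / 2) *
      (if b' then (F - E) * Complex.I / 2 else (E + F) / 2)) =
    uu b b' (-1) * (F * F) + uu b b' 0 + uu b b' 1 * (E * E) := by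
  have hI : Complex.I ^ 2 = -1 := Complex.I_sq
  cases b <;> cases b' <;> simp only [uu, if_true, if_false, reduceIte, Bool.false_eq_true,
    Bool.true_eq_false] <;> push_cast
  · linear_combination (1/2 : ℂ) * h
  · ring
  · ring
  · linear_combination ((F - E) ^ 2 / 4) * hI + (1/2 : ℂ) * h

lemma pair_expand (b b' : Bool) (x : ℝ) :
    (((if b then Real.sin x else Real.cos x : ℝ)) : ℂ) *
      (((if b' then Real.sin x else Real.cos x : ℝ)) : ℂ) =
    ∑ ε ∈ ({-1, 0, 1} : Finset ℤ),
      uu b b' ε * Complex.exp ((ε : ℂ) * Complex.I * (2 * (x : ℂ))) := by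
  have h : Complex.exp ((x : ℂ) * Complex.I) * Complex.exp (-(x : ℂ) * Complex.I) = 1 := by
    rw [← Complex.exp_add]; simp
  have hp : Complex.exp (((1 : ℤ) : ℂ) * Complex.I * (2 * (x : ℂ)))
      = Complex.exp ((x : ℂ) * Complex.I) * Complex.exp ((x : ℂ) * Complex.I) := by
    rw [← Complex.exp_add]; congr 1; push_cast; ring
  have hm : Complex.exp ((((-1 : ℤ)) : ℂ) * Complex.I * (2 * (x : ℂ)))
      = Complex.exp (-(x : ℂ) * Complex.I) * Complex.exp (-(x : ℂ) * Complex.I) := by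
    rw [← Complex.exp_add]; congr 1; push_cast; ring
  have h0 : Complex.exp ((((0 : ℤ)) : ℂ) * Complex.I * (2 * (x : ℂ))) = 1 := by
    norm_num
  have hb : ∀ c : Bool, (((if c then Real.sin x else Real.cos x : ℝ)) : ℂ)
      = if c then (Complex.exp (-(x : ℂ) * Complex.I) - Complex.exp ((x : ℂ) * Complex.I))
          * Complex.I / 2
        else (Complex.exp ((x : ℂ) * Complex.I) + Complex.exp (-(x : ℂ) * Complex.I)) / 2 := by
    intro c
    cases c <;>
      simp only [if_true, if_false, Bool.false_eq_true, Complex.ofReal_cos, Complex.ofReal_sin,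
        Complex.cos, Complex.sin]
  rw [sum_three, hp, hm, h0, mul_one, hb, hb, pair_core b b' _ _ h]

lemma zbound (f : ℕ → ℤ) (hf : ∀ m, f m = -1 ∨ f m = 0 ∨ f m = 1) (n : ℕ) :
    -(2 ^ (n + 2)) + 4 ≤ (∑ m ∈ Finset.Icc 1 n, f m * 2 ^ (m + 1)) ∧
      (∑ m ∈ Finset.Icc 1 n, f m * 2 ^ (m + 1)) ≤ 2 ^ (n + 2) - 4 := by
  induction n with
  | zero => simp
  | succ n ih =>
    rw [← Finset.insert_Icc_right_eq_Icc_add_one (by omega), Finset.sum_insert (by simp)]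
    have e : (2 : ℤ) ^ (n + 1 + 2) = 2 * 2 ^ (n + 2) := by ring
    have e2 : (2 : ℤ) ^ (n + 1 + 1) = 2 ^ (n + 2) := by ring
    rcases hf (n + 1) with h | h | h <;> rw [h] <;>
      constructor <;> rw [e, e2] <;> linarith [ih.1, ih.2]

lemma zsum_zero (f : ℕ → ℤ) (hf : ∀ m, f m = -1 ∨ f m = 0 ∨ f m = 1) (n : ℕ)
    (h : (∑ m ∈ Finset.Icc 1 n, f m * 2 ^ (m + 1)) = 0) :
    ∀ m ∈ Finset.Icc 1 n, f m = 0 := by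
  induction n with
  | zero => simp
  | succ n ih =>
    rw [← Finset.insert_Icc_right_eq_Icc_add_one (by omega), Finset.sum_insert (by simp)] at h
    have hb := zbound f hf n
    have e2 : (2 : ℤ) ^ (n + 1 + 1) = 2 ^ (n + 2) := by ring
    rw [e2] at h
    have hfz : f (n + 1) = 0 := by
      rcases hf (n + 1) with h1 | h1 | h1
      · rw [h1] at h; linarith [hb.2]
      · exact h1
      · rw [h1] at h; linarith [hb.1]
    have hS : (∑ m ∈ Finset.Icc 1 n, f m * 2 ^ (m + 1)) = 0 := by
      rw [hfz] at h; linarith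
    intro m hm
    rw [← Finset.insert_Icc_right_eq_Icc_add_one (by omega), Finset.mem_insert] at hm
    rcases hm with rfl | hm
    · exact hfz
    · exact ih hS m hm

open Complex in
lemma integral_exp_int (K : ℤ) (hK : K ≠ 0) :
    (∫ θ in (-Real.pi)..Real.pi, Complex.exp ((K : ℂ) * Complex.I * θ)) = 0 := by
  have hc : (K : ℂ) * Complex.I ≠ 0 :=
    mul_ne_zero (Int.cast_ne_zero.mpr hK) Complex.I_ne_zero
  have := integral_exp_mul_complex (a := -Real.pi) (b := Real.pi) hc
  simp only [mul_assoc] at this ⊢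
  rw [this]
  have : Complex.exp ((K : ℂ) * (Complex.I * (Real.pi : ℂ)))
      = Complex.exp ((K : ℂ) * (Complex.I * ((-Real.pi : ℝ) : ℂ))) := by
    rw [Complex.exp_eq_exp_iff_exists_int]
    exact ⟨K, by push_cast; ring⟩
  rw [this, sub_self, zero_div]

lemma uu_zero (b b' : Bool) (h : b ≠ b') : uu b b' 0 = 0 := by
  simp [uu, h]

/-- For all indices `j ≠ k` in `{0,…,N−1}`, the expectation over `θ` drawn
uniformly from `[−π, π]` satisfies `E_θ[x_j(θ)·x_k(θ)] = 0`. -/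
theorem stmt_1 (N : ℕ) (hN : 1 ≤ N) (j k : Fin N) (hjk : j ≠ k) :
    (2 * Real.pi)⁻¹ * ∫ θ in (-Real.pi)..Real.pi, xvec N θ j * xvec N θ k = 0 := by
  classical
  have hN2 : 2 ≤ N := by
    by_contra h
    push_neg at h
    interval_cases N
    exact hjk (Subsingleton.elim j k)
  set n := Nat.clog 2 N with hndef
  have hn1 : 1 ≤ n := Nat.clog_pos (by norm_num) hN2
  have hNle : N ≤ 2 ^ n := Nat.le_pow_clog (by norm_num) N
  set bj : ℕ → Bool := fun m => decide (j.val / 2 ^ (n - m) % 2 = 1) with hbj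
  set bk : ℕ → Bool := fun m => decide (k.val / 2 ^ (n - m) % 2 = 1) with hbk
  obtain ⟨m0, hm0, hbne⟩ : ∃ m ∈ Finset.Icc 1 n, bj m ≠ bk m := by
    by_contra h
    push_neg at h
    refine hjk (Fin.ext (Nat.eq_of_testBit_eq fun p => ?_))
    rcases Nat.lt_or_ge p n with hp | hp
    · have h1 := h (n - p) (Finset.mem_Icc.mpr ⟨by omega, by omega⟩)
      have hnp : n - (n - p) = p := by omega
      rw [hbj, hbk] at h1
      simp only [hnp] at h1
      rw [Nat.testBit_eq_decide_div_mod_eq, Nat.testBit_eq_decide_div_mod_eq]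
      exact h1
    · rw [Nat.testBit_lt_two_pow
        (lt_of_lt_of_le j.isLt (hNle.trans (Nat.pow_le_pow_right (by norm_num) hp))),
        Nat.testBit_lt_two_pow
        (lt_of_lt_of_le k.isLt (hNle.trans (Nat.pow_le_pow_right (by norm_num) hp)))]
  have hx : ∀ θ : ℝ, xvec N θ j * xvec N θ k = ((2 : ℝ) ^ n / N) *
      ∏ m ∈ Finset.Icc 1 n,
        ((if bj m then Real.sin ((2 : ℝ) ^ m * θ) else Real.cos ((2 : ℝ) ^ m * θ)) *
          (if bk m then Real.sin ((2 : ℝ) ^ m * θ) else Real.cos ((2 : ℝ) ^ m * θ))) := by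
    intro θ
    simp only [xvec, ← hndef]
    rw [mul_mul_mul_comm, Real.mul_self_sqrt (by positivity), ← Finset.prod_mul_distrib]
    congr 1
    refine Finset.prod_congr rfl fun m _ => ?_
    rw [hbj, hbk]
    simp only [decide_eq_true_eq]
  simp only [hx]
  rw [intervalIntegral.integral_const_mul]
  suffices hI : (∫ θ in (-Real.pi)..Real.pi, ∏ m ∈ Finset.Icc 1 n,
      ((if bj m then Real.sin ((2 : ℝ) ^ m * θ) else Real.cos ((2 : ℝ) ^ m * θ)) *
        (if bk m then Real.sin ((2 : ℝ) ^ m * θ) else Real.cos ((2 : ℝ) ^ m * θ)))) = 0 by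
    rw [hI, mul_zero, mul_zero]
  have hC : (((∫ θ in (-Real.pi)..Real.pi, ∏ m ∈ Finset.Icc 1 n,
      ((if bj m then Real.sin ((2 : ℝ) ^ m * θ) else Real.cos ((2 : ℝ) ^ m * θ)) *
        (if bk m then Real.sin ((2 : ℝ) ^ m * θ) else Real.cos ((2 : ℝ) ^ m * θ)))) : ℝ) : ℂ)
      = 0 := by
    rw [← intervalIntegral.integral_ofReal]
    have hGrw : ∀ θ : ℝ, ((( ∏ m ∈ Finset.Icc 1 n,
        ((if bj m then Real.sin ((2 : ℝ) ^ m * θ) else Real.cos ((2 : ℝ) ^ m * θ)) *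
          (if bk m then Real.sin ((2 : ℝ) ^ m * θ) else Real.cos ((2 : ℝ) ^ m * θ))) : ℝ)) : ℂ)
        = ∑ p ∈ (Finset.Icc 1 n).pi (fun _ => ({-1, 0, 1} : Finset ℤ)),
            (∏ x ∈ (Finset.Icc 1 n).attach, uu (bj x.1) (bk x.1) (p x.1 x.2)) *
              Complex.exp
                (((∑ x ∈ (Finset.Icc 1 n).attach,
                    p x.1 x.2 * 2 ^ ((x : ℕ) + 1) : ℤ) : ℂ) * Complex.I * θ) := by
      intro θ
      rw [Complex.ofReal_prod]
      calc ∏ m ∈ Finset.Icc 1 n,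
            ((((if bj m then Real.sin ((2 : ℝ) ^ m * θ) else Real.cos ((2 : ℝ) ^ m * θ)) *
              (if bk m then Real.sin ((2 : ℝ) ^ m * θ)
                else Real.cos ((2 : ℝ) ^ m * θ)) : ℝ)) : ℂ)
          = ∏ m ∈ Finset.Icc 1 n, ∑ ε ∈ ({-1, 0, 1} : Finset ℤ),
              uu (bj m) (bk m) ε *
                Complex.exp ((ε : ℂ) * Complex.I * (2 * (((2 : ℝ) ^ m * θ : ℝ) : ℂ))) := by
            refine Finset.prod_congr rfl fun m _ => ?_
            rw [Complex.ofReal_mul]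
            exact pair_expand _ _ _
        _ = ∑ p ∈ (Finset.Icc 1 n).pi (fun _ => ({-1, 0, 1} : Finset ℤ)),
              ∏ x ∈ (Finset.Icc 1 n).attach,
                (uu (bj x.1) (bk x.1) (p x.1 x.2) *
                  Complex.exp ((((p x.1 x.2 : ℤ)) : ℂ) * Complex.I *
                    (2 * (((2 : ℝ) ^ (x : ℕ) * θ : ℝ) : ℂ)))) :=
            Finset.prod_sum _ _ _
        _ = _ := by
            refine Finset.sum_congr rfl fun p hp => ?_
            rw [Finset.prod_mul_distrib, ← Complex.exp_sum]
            refine congrArg₂ HMul.hMul rfl (congrArg Complex.exp ?_)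
            push_cast
            rw [Finset.sum_mul, Finset.sum_mul]
            exact Finset.sum_congr rfl fun x _ => by ring
    simp only [hGrw]
    rw [intervalIntegral.integral_finset_sum]
    · refine Finset.sum_eq_zero fun p hp => ?_
      rw [intervalIntegral.integral_const_mul]
      by_cases hK : (∑ x ∈ (Finset.Icc 1 n).attach, p x.1 x.2 * 2 ^ ((x : ℕ) + 1)) = 0
      · have hmem : ∀ (m : ℕ) (hm : m ∈ Finset.Icc 1 n),
            p m hm ∈ ({-1, 0, 1} : Finset ℤ) := Finset.mem_pi.mp hp
        set f : ℕ → ℤ := fun m =>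
          if h : m ∈ Finset.Icc 1 n then p m h else 0 with hfdef
        have hfr : ∀ m, f m = -1 ∨ f m = 0 ∨ f m = 1 := by
          intro m
          by_cases h : m ∈ Finset.Icc 1 n
          · have hm := hmem m h
            simp only [Finset.mem_insert, Finset.mem_singleton] at hm
            have : f m = p m h := by simp only [hfdef]; exact dif_pos h
            rw [this]
            tauto
          · refine Or.inr (Or.inl ?_)
            simp only [hfdef]
            exact dif_neg h
        have hKf : (∑ m ∈ Finset.Icc 1 n, f m * 2 ^ (m + 1)) = 0 := by
          rw [← Finset.sum_attach (Finset.Icc 1 n) (fun m => f m * 2 ^ (m + 1)), ← hK]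
          exact Finset.sum_congr rfl fun x _ => by
            simp only [hfdef]
            rw [dif_pos x.2]
        have hp0 : p m0 hm0 = 0 := by
          have h0 := zsum_zero f hfr n hKf m0 hm0
          have he : f m0 = p m0 hm0 := by simp only [hfdef]; exact dif_pos hm0
          rw [← he]
          exact h0
        have hprod : (∏ x ∈ (Finset.Icc 1 n).attach,
            uu (bj x.1) (bk x.1) (p x.1 x.2)) = 0 := by
          apply Finset.prod_eq_zero
            (Finset.mem_attach _ (⟨m0, hm0⟩ : {x // x ∈ Finset.Icc 1 n}))
          show uu (bj m0) (bk m0) (p m0 hm0) = 0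
          rw [hp0]
          exact uu_zero _ _ hbne
        rw [hprod, zero_mul]
      · rw [integral_exp_int _ hK, mul_zero]
    · intro p hp
      apply Continuous.intervalIntegrable
      fun_prop
  exact_mod_cast hC
end

section
/- For every index j ∈ {0,…,N−1}, the expectation over θ drawn uniformly from [−π, π] satisfies E_θ[x_j(θ)²] = 1/N. -/
open Real Finset

/-!
Squaring the product, `x_j(θ)² = (2^n/N) ∏_{k=1}^n cos²(2^k θ - φ_k)` with phases
`φ_k ∈ {0, π/2}`. A product `P` of squared cosines at distinct dyadic frequencies has mean
`2^{-#factors}` over a period: if `2^a` is the lowest frequency, the shift `θ ↦ θ + π/2^{a+1}`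
turns the lowest factor `cos²` into `sin²` and moves every other argument by a multiple of `π`,
so `P(θ) + P(θ + π/2^{a+1})` is the product without the lowest factor, and integrating over a
period halves that product's integral.
-/

theorem Function.Periodic.intervalIntegral_comp_add_right {F : ℝ → ℝ} {T : ℝ}
    (hF : Function.Periodic F T) (t c : ℝ) :
    ∫ x in t..t + T, F (x + c) = ∫ x in t..t + T, F x := by
  rw [intervalIntegral.integral_comp_add_right, add_right_comm]
  exact hF.intervalIntegral_add_eq (t + c) t

theorem Real.cos_sq_add_nat_mul_pi (x : ℝ) (m : ℕ) : cos (x + m * π) ^ 2 = cos x ^ 2 := by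
  rw [cos_add_nat_mul_pi, mul_pow, ← pow_mul, pow_mul', neg_one_sq, one_pow, one_mul]

theorem prod_cos_sq_two_pow_mul_add (s : Finset ℕ) (φ : ℕ → ℝ) {c : ℝ}
    (hc : ∀ k ∈ s, ∃ m : ℕ, 2 ^ k * c = m * π) (θ : ℝ) :
    ∏ k ∈ s, cos (2 ^ k * (θ + c) - φ k) ^ 2 = ∏ k ∈ s, cos (2 ^ k * θ - φ k) ^ 2 := by
  refine prod_congr rfl fun k hk => ?_
  obtain ⟨m, hm⟩ := hc k hk
  have hshift : 2 ^ k * (θ + c) - φ k = 2 ^ k * θ - φ k + m * π := by rw [← hm]; ring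
  rw [hshift, cos_sq_add_nat_mul_pi]

theorem integral_prod_cos_sq_two_pow (s : Finset ℕ) (φ : ℕ → ℝ) (t : ℝ) :
    ∫ θ in t..t + 2 * π, ∏ k ∈ s, cos (2 ^ k * θ - φ k) ^ 2 = 2 * π / 2 ^ s.card := by
  induction s using Finset.induction_on_min with
  | empty => simp
  | insert a s has ih =>
    set Q : ℝ → ℝ := fun θ => ∏ k ∈ s, cos (2 ^ k * θ - φ k) ^ 2
    set P : ℝ → ℝ := fun θ => ∏ k ∈ insert a s, cos (2 ^ k * θ - φ k) ^ 2
    have ha : a ∉ s := fun h => lt_irrefl a (has a h)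
    have hP : Function.Periodic P (2 * π) :=
      prod_cos_sq_two_pow_mul_add _ φ fun k _ => ⟨2 ^ (k + 1), by push_cast; ring⟩
    have hQ : Function.Periodic Q (π / 2 ^ (a + 1)) :=
      prod_cos_sq_two_pow_mul_add _ φ fun k hk => ⟨2 ^ (k - (a + 1)), by
        rw [Nat.cast_pow, Nat.cast_ofNat, pow_sub₀ _ two_ne_zero (has k hk)]
        field_simp⟩
    have hPQ : ∀ θ, P θ = cos (2 ^ a * θ - φ a) ^ 2 * Q θ := fun θ => prod_insert ha
    have hswap : ∀ θ, P θ + P (θ + π / 2 ^ (a + 1)) = Q θ := by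
      intro θ
      rw [hPQ, hPQ, hQ θ]
      have hquarter : 2 ^ a * (θ + π / 2 ^ (a + 1)) - φ a = 2 ^ a * θ - φ a + π / 2 := by
        field_simp; ring
      rw [hquarter, cos_add_pi_div_two, neg_sq, ← add_mul, cos_sq_add_sin_sq, one_mul]
    have hPcont : Continuous P := by fun_prop
    calc ∫ θ in t..t + 2 * π, P θ
        = ((∫ θ in t..t + 2 * π, P θ) + ∫ θ in t..t + 2 * π, P (θ + π / 2 ^ (a + 1))) / 2 := by
          rw [hP.intervalIntegral_comp_add_right, add_self_div_two]
      _ = (∫ θ in t..t + 2 * π, Q θ) / 2 := by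
          rw [← intervalIntegral.integral_add (hPcont.intervalIntegrable _ _)
            ((by fun_prop : Continuous fun θ => P (θ + π / 2 ^ (a + 1))).intervalIntegrable _ _)]
          simp only [hswap]
      _ = 2 * π / 2 ^ (insert a s).card := by
          rw [ih, card_insert_of_notMem ha, pow_succ]; ring

theorem stmt_2_general (N : ℕ) (j : Fin N) :
    (2 * Real.pi)⁻¹ * ∫ θ in (-Real.pi)..Real.pi, (xvec N θ j) ^ 2 = 1 / N := by
  set n := Nat.clog 2 N
  set φ : ℕ → ℝ := fun k => if j.val / 2 ^ (n - k) % 2 = 1 then π / 2 else 0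
  have hsq : ∀ θ, xvec N θ j ^ 2 = 2 ^ n / N * ∏ k ∈ Icc 1 n, cos (2 ^ k * θ - φ k) ^ 2 := by
    intro θ
    rw [xvec, mul_pow, sq_sqrt (by positivity), ← prod_pow]
    congr 1
    refine prod_congr rfl fun k _ => ?_
    simp only [φ]
    split_ifs <;> simp [cos_sub_pi_div_two]
  have hI := integral_prod_cos_sq_two_pow (Icc 1 n) φ (-π)
  rw [show -π + 2 * π = π by ring, Nat.card_Icc, add_tsub_cancel_right] at hI
  simp only [hsq, intervalIntegral.integral_const_mul, hI]
  field_simp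

/-- For every index `j ∈ {0,…,N−1}`, the expectation over `θ` drawn
uniformly from `[−π, π]` satisfies `E_θ[x_j(θ)²] = 1/N`. -/
theorem stmt_2 (N : ℕ) (hN : 1 ≤ N) (j : Fin N) :
    (2 * Real.pi)⁻¹ * ∫ θ in (-Real.pi)..Real.pi, (xvec N θ j) ^ 2 = 1 / N :=
  stmt_2_general N j
end

section
/- Lemma 1: Let A ∈ ℂ^{N×N} be unitarily similar to a diagonal matrix, i.e., A = W D W† with W unitary and D diagonal. Then the expectation over θ drawn uniformly from [−π, π] satisfies E_θ[ Σ_{j,k} x_j(θ) · A_{jk} · x_k(θ) ] = Tr(A)/N, i.e., E_θ ⟨x(θ), A x(θ)⟩ = Tr(A)/N. -/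
/-!
Up to the factor `2^n / N`, `x_i(θ) x_k(θ)` is a product over `j` of `s_j(2^j θ) t_j(2^j θ)` with
`s_j, t_j ∈ {sin, cos}` read off the bits of `i` and `k`. Each factor equals
`a_j + b_j e^{2^{j+1} iθ} + c_j e^{-2^{j+1} iθ}`, with mean `a_j = 1/2` if `s_j = t_j` and `0`
otherwise. The frequencies `2^{j+1}` are lacunary (`Σ ε_j 2^{j+1} = 0` with `ε_j ∈ {-1, 0, 1}`
forces all `ε_j = 0`), so the mean of the product over `[-π, π]` is the product of the means. As
distinct indices differ in some bit, `E[x xᵀ] = I / N`, hence `E⟨x, A x⟩ = Tr (A E[x xᵀ]) = Tr A / N`.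
-/

open Real Finset Matrix

open Complex (I)
open scoped Complex

theorem integral_exp_int_mul_I (m : ℤ) :
    ∫ θ in -π..π, cexp (m * θ * I) = if m = 0 then 2 * (π : ℂ) else 0 := by
  split_ifs with hm
  · simp only [hm, Int.cast_zero, zero_mul, Complex.exp_zero, intervalIntegral.integral_const,
      sub_neg_eq_add, Complex.real_smul, Complex.ofReal_add, mul_one]
    ring
  · have hc : (m : ℂ) * I ≠ 0 := by simp [hm]
    simp_rw [mul_right_comm _ _ I]
    rw [integral_exp_mul_complex hc, div_eq_zero_iff, sub_eq_zero]
    left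
    calc cexp (m * I * π) = cexp (m * I * ↑(-π)) * cexp (m * (2 * π * I)) := by
          rw [← Complex.exp_add]; push_cast; ring_nf
      _ = cexp (m * I * ↑(-π)) := by rw [Complex.exp_int_mul_two_pi_mul_I, mul_one]

section Lacunary

variable (a b c : ℕ → ℂ)

noncomputable def lacunaryProduct (n : ℕ) (θ : ℝ) : ℂ :=
  ∏ j ∈ Icc 1 n, (a j + b j * cexp (2 ^ (j + 1) * θ * I) + c j * cexp (-(2 ^ (j + 1) * θ) * I))

@[simp]
theorem lacunaryProduct_zero (θ : ℝ) : lacunaryProduct a b c 0 θ = 1 := by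
  simp [lacunaryProduct]

theorem lacunaryProduct_succ (n : ℕ) (θ : ℝ) :
    lacunaryProduct a b c (n + 1) θ = lacunaryProduct a b c n θ *
      (a (n + 1) + b (n + 1) * cexp (2 ^ (n + 2) * θ * I)
        + c (n + 1) * cexp (-(2 ^ (n + 2) * θ) * I)) :=
  prod_Icc_succ_top (by omega) _

theorem continuous_lacunaryProduct (n : ℕ) : Continuous (lacunaryProduct a b c n) := by
  unfold lacunaryProduct
  fun_prop

theorem intervalIntegrable_lacunaryProduct_mul_exp (n : ℕ) (m : ℤ) (s t : ℝ) :
    IntervalIntegrable (fun θ : ℝ => lacunaryProduct a b c n θ * cexp (m * θ * I))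
      MeasureTheory.volume s t :=
  ((continuous_lacunaryProduct a b c n).mul (by fun_prop)).intervalIntegrable _ _

theorem integral_lacunaryProduct_succ_mul_exp (n : ℕ) (m : ℤ) :
    ∫ θ in -π..π, lacunaryProduct a b c (n + 1) θ * cexp (m * θ * I) =
      a (n + 1) * (∫ θ in -π..π, lacunaryProduct a b c n θ * cexp (m * θ * I))
      + b (n + 1) * (∫ θ in -π..π, lacunaryProduct a b c n θ * cexp ((m + 2 ^ (n + 2) : ℤ) * θ * I))
      + c (n + 1) * ∫ θ in -π..π, lacunaryProduct a b c n θ * cexp ((m - 2 ^ (n + 2) : ℤ) * θ * I) := by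
  have hshift : ∀ θ : ℝ, cexp ((m + 2 ^ (n + 2) : ℤ) * θ * I) =
        cexp (2 ^ (n + 2) * θ * I) * cexp (m * θ * I) ∧
      cexp ((m - 2 ^ (n + 2) : ℤ) * θ * I) = cexp (-(2 ^ (n + 2) * θ) * I) * cexp (m * θ * I) :=
    fun θ => ⟨by rw [← Complex.exp_add]; push_cast; ring_nf,
      by rw [← Complex.exp_add]; push_cast; ring_nf⟩
  have hI := intervalIntegrable_lacunaryProduct_mul_exp a b c n
  rw [← intervalIntegral.integral_const_mul, ← intervalIntegral.integral_const_mul,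
    ← intervalIntegral.integral_const_mul,
    ← intervalIntegral.integral_add ((hI m _ _).const_mul _) ((hI _ _ _).const_mul _),
    ← intervalIntegral.integral_add (((hI m _ _).const_mul _).add ((hI _ _ _).const_mul _))
      ((hI _ _ _).const_mul _)]
  refine intervalIntegral.integral_congr fun θ _ => ?_
  simp only [lacunaryProduct_succ, (hshift θ).1, (hshift θ).2]
  ring

-- The frequencies of `lacunaryProduct a b c n` are smaller than `4 + 8 + ⋯ + 2^(n+1) < 2^(n+2)`.
theorem integral_lacunaryProduct_mul_exp_eq_zero (n : ℕ) {m : ℤ} (hm : 2 ^ (n + 2) ≤ |m|) :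
    ∫ θ in -π..π, lacunaryProduct a b c n θ * cexp (m * θ * I) = 0 := by
  induction n generalizing m with
  | zero =>
    have hm0 : m ≠ 0 := by rintro rfl; norm_num at hm
    simp [integral_exp_int_mul_I, hm0]
  | succ n ih =>
    have hfar : ∀ s : ℤ, |s| ≤ 2 ^ (n + 2) → 2 ^ (n + 2) ≤ |m + s| := fun s hs => by
      have := abs_add_le (m + s) (-s)
      rw [abs_neg, add_neg_cancel_right] at this
      rw [pow_succ] at hm
      linarith
    have hK : |(2 : ℤ) ^ (n + 2)| ≤ 2 ^ (n + 2) := (abs_of_nonneg (by positivity)).le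
    rw [integral_lacunaryProduct_succ_mul_exp, ih (hfar _ hK), sub_eq_add_neg,
      ih (hfar _ (by rwa [abs_neg])), ih]
    · ring
    · simpa using hfar 0 (by simp)

theorem integral_lacunaryProduct (n : ℕ) :
    ∫ θ in -π..π, lacunaryProduct a b c n θ = 2 * π * ∏ j ∈ Icc 1 n, a j := by
  have hmean : ∀ n, ∫ θ in -π..π, lacunaryProduct a b c n θ =
      ∫ θ in -π..π, lacunaryProduct a b c n θ * cexp ((0 : ℤ) * θ * I) := by simp
  induction n with
  | zero => simpa using integral_exp_int_mul_I 0
  | succ n ih =>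
    rw [hmean, integral_lacunaryProduct_succ_mul_exp, ← hmean, ih,
      integral_lacunaryProduct_mul_exp_eq_zero a b c n (by simp),
      integral_lacunaryProduct_mul_exp_eq_zero a b c n (by simp),
      prod_Icc_succ_top (by omega)]
    ring

end Lacunary

noncomputable def sinOrCos (b : Bool) (x : ℝ) : ℝ := if b then sin x else cos x

@[fun_prop]
theorem continuous_sinOrCos (b : Bool) : Continuous (sinOrCos b) := by
  unfold sinOrCos
  cases b
  · simpa using continuous_cos
  · simpa using continuous_sin

theorem sinOrCos_mul_sinOrCos (b c : Bool) : ∃ β γ : ℂ, ∀ x : ℝ,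
    (sinOrCos b x * sinOrCos c x : ℂ) =
      (if b = c then 1 / 2 else 0) + β * cexp (2 * x * I) + γ * cexp (-(2 * x) * I) := by
  have hpos : ∀ x : ℝ, cexp (2 * x * I) =
      Complex.cos x ^ 2 - Complex.sin x ^ 2 + 2 * Complex.sin x * Complex.cos x * I := fun x => by
    rw [Complex.exp_mul_I, Complex.cos_two_mul, Complex.sin_two_mul, Complex.cos_sq']
    ring
  have hneg : ∀ x : ℝ, cexp (-(2 * x) * I) =
      Complex.cos x ^ 2 - Complex.sin x ^ 2 - 2 * Complex.sin x * Complex.cos x * I := fun x => by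
    rw [Complex.exp_mul_I, Complex.cos_neg, Complex.sin_neg, Complex.cos_two_mul,
      Complex.sin_two_mul, Complex.cos_sq']
    ring
  cases b <;> cases c
  · refine ⟨1 / 4, 1 / 4, fun x => ?_⟩
    simp only [sinOrCos, hpos, hneg]
    push_cast
    linear_combination (1 / 2 : ℂ) * Complex.sin_sq_add_cos_sq (x : ℂ)
  · refine ⟨-I / 4, I / 4, fun x => ?_⟩
    simp only [sinOrCos, hpos, hneg]
    push_cast
    linear_combination (Complex.sin x * Complex.cos x) * Complex.I_sq
  · refine ⟨-I / 4, I / 4, fun x => ?_⟩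
    simp only [sinOrCos, hpos, hneg]
    push_cast
    linear_combination (Complex.sin x * Complex.cos x) * Complex.I_sq
  · refine ⟨-1 / 4, -1 / 4, fun x => ?_⟩
    simp only [sinOrCos, hpos, hneg]
    push_cast
    linear_combination (1 / 2 : ℂ) * Complex.sin_sq_add_cos_sq (x : ℂ)

theorem Nat.eq_of_testBit_sub_eq {x y n : ℕ} (hx : x < 2 ^ n) (hy : y < 2 ^ n)
    (h : ∀ j ∈ Icc 1 n, x.testBit (n - j) = y.testBit (n - j)) : x = y := by
  rw [← Nat.mod_eq_of_lt hx, ← Nat.mod_eq_of_lt hy]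
  refine Nat.eq_of_testBit_eq fun s => ?_
  rw [Nat.testBit_mod_two_pow, Nat.testBit_mod_two_pow]
  by_cases hs : s < n
  · have := h (n - s) (mem_Icc.mpr ⟨by omega, by omega⟩)
    rw [Nat.sub_sub_self hs.le] at this
    rw [this]
  · simp [hs]

theorem xvec_eq (N : ℕ) (θ : ℝ) (i : Fin N) :
    xvec N θ i = √(2 ^ Nat.clog 2 N / N) *
      ∏ j ∈ Icc 1 (Nat.clog 2 N), sinOrCos ((i : ℕ).testBit (Nat.clog 2 N - j)) (2 ^ j * θ) := by
  simp only [xvec, sinOrCos, Nat.testBit_eq_decide_div_mod_eq, decide_eq_true_eq]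

theorem continuous_xvec (N : ℕ) (i : Fin N) : Continuous fun θ => xvec N θ i := by
  simp_rw [xvec_eq]
  fun_prop

theorem integral_xvec_mul_xvec (N : ℕ) (i k : Fin N) :
    ∫ θ in -π..π, xvec N θ i * xvec N θ k = if i = k then 2 * π / N else 0 := by
  choose β γ hfactor using sinOrCos_mul_sinOrCos
  have hprod : ∀ θ, ((xvec N θ i * xvec N θ k : ℝ) : ℂ) = (2 ^ Nat.clog 2 N / N : ℝ) *
      lacunaryProduct
        (fun j => if (i : ℕ).testBit (Nat.clog 2 N - j) = (k : ℕ).testBit (Nat.clog 2 N - j)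
          then 1 / 2 else 0)
        (fun j => β ((i : ℕ).testBit (Nat.clog 2 N - j)) ((k : ℕ).testBit (Nat.clog 2 N - j)))
        (fun j => γ ((i : ℕ).testBit (Nat.clog 2 N - j)) ((k : ℕ).testBit (Nat.clog 2 N - j)))
        (Nat.clog 2 N) θ := by
    intro θ
    rw [xvec_eq, xvec_eq, mul_mul_mul_comm, Real.mul_self_sqrt (by positivity),
      ← prod_mul_distrib]
    push_cast
    congr 1
    refine prod_congr rfl fun j _ => ?_
    rw [hfactor]
    push_cast
    ring_nf
  apply Complex.ofReal_injective
  rw [← intervalIntegral.integral_ofReal, intervalIntegral.integral_congr fun θ _ => hprod θ,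
    intervalIntegral.integral_const_mul, integral_lacunaryProduct, prod_ite_zero]
  have hpow : N ≤ 2 ^ Nat.clog 2 N := Nat.le_pow_clog one_lt_two N
  have hbits : (∀ j ∈ Icc 1 (Nat.clog 2 N),
      (i : ℕ).testBit (Nat.clog 2 N - j) = (k : ℕ).testBit (Nat.clog 2 N - j)) ↔ i = k :=
    ⟨fun h => Fin.ext (Nat.eq_of_testBit_sub_eq (i.2.trans_le hpow) (k.2.trans_le hpow) h),
      by rintro rfl; simp⟩
  simp only [hbits]
  split_ifs
  · rw [prod_const, Nat.card_Icc, Nat.add_sub_cancel]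
    push_cast
    field_simp
    rw [← mul_pow]
    norm_num
  · simp

theorem intervalIntegral_sum_sum_ofReal_mul_mul {ι : Type*} [Fintype ι] {x : ι → ℝ → ℝ}
    (hx : ∀ i, Continuous (x i)) (A : Matrix ι ι ℂ) (s t : ℝ) :
    ∫ θ in s..t, ∑ j, ∑ k, (x j θ : ℂ) * A j k * (x k θ : ℂ) =
      ∑ j, ∑ k, A j k * ↑(∫ θ in s..t, x j θ * x k θ) := by
  have hcont : ∀ j k, Continuous fun θ => (x j θ : ℂ) * A j k * (x k θ : ℂ) := fun j k => by
    have := hx j; have := hx k; fun_prop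
  rw [intervalIntegral.integral_finsetSum fun j _ =>
    (continuous_finsetSum _ fun k _ => hcont j k).intervalIntegrable _ _]
  refine sum_congr rfl fun j _ => ?_
  rw [intervalIntegral.integral_finsetSum fun k _ => (hcont j k).intervalIntegrable _ _]
  refine sum_congr rfl fun k _ => ?_
  rw [← intervalIntegral.integral_ofReal, ← intervalIntegral.integral_const_mul]
  refine intervalIntegral.integral_congr fun θ _ => ?_
  push_cast
  ring

theorem stmt_4_general (N : ℕ) (A : Matrix (Fin N) (Fin N) ℂ) :
    (2 * Real.pi)⁻¹ •
        (∫ θ in (-Real.pi)..Real.pi,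
          ∑ j, ∑ k, (xvec N θ j : ℂ) * A j k * (xvec N θ k : ℂ)) = A.trace / N := by
  rw [intervalIntegral_sum_sum_ofReal_mul_mul (x := fun j θ => xvec N θ j) (continuous_xvec N)]
  simp only [integral_xvec_mul_xvec, apply_ite Complex.ofReal, Complex.ofReal_zero, mul_ite,
    mul_zero, sum_ite_eq, mem_univ, if_true]
  rw [Complex.real_smul, Matrix.trace, ← sum_mul]
  simp only [diag_apply]
  push_cast
  field_simp

/-- **Lemma 1.** Let `A ∈ ℂ^{N×N}` be unitarily similar to a diagonal matrix,
`A = W D W†` with `W` unitary and `D` diagonal. Then the expectation over `θ` uniform on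
`[−π, π]` satisfies `E_θ ⟨x(θ), A x(θ)⟩ = Tr(A)/N`. -/
theorem stmt_4 (N : ℕ) (hN : 1 ≤ N) (A : Matrix (Fin N) (Fin N) ℂ)
    (W : Matrix (Fin N) (Fin N) ℂ) (D : Fin N → ℂ)
    (hW : W ∈ Matrix.unitaryGroup (Fin N) ℂ)
    (hA : A = W * Matrix.diagonal D * Wᴴ) :
    (2 * Real.pi)⁻¹ •
        (∫ θ in (-Real.pi)..Real.pi,
          ∑ j, ∑ k, (xvec N θ j : ℂ) * A j k * (xvec N θ k : ℂ)) = A.trace / N :=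
  stmt_4_general N A
end

section
/- Theorem 3: Let Ũ = Σ_{κ=1}^K α_κ U_κ ∈ ℂ^{N×N} be a mixed quantum operation. Let ε > 0, δ ∈ (0,1), and let m be an integer with m ≥ 2·log(2/δ) / (ε² · max{ε, ‖Ũ‖_{S₂}}²). If θ₁,…,θ_m are independent and uniformly distributed on [−π, π], then with probability at least 1 − δ one has | √( (1/m) Σ_{i=1}^m ⟨x(θ_i), Ũ Ũ† x(θ_i)⟩ ) − ‖Ũ‖_{S₂} | ≤ ε, where each ⟨x(θ_i), Ũ Ũ† x(θ_i)⟩ = ‖Ũ† x(θ_i)‖² is a nonnegative real number. -/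
open Real Finset Matrix MeasureTheory ProbabilityTheory

/-- The uniform probability distribution on `[−π, π]`. -/
noncomputable def uniformPiPi : Measure ℝ :=
  (ENNReal.ofReal (2 * Real.pi))⁻¹ • (MeasureTheory.volume.restrict (Set.Icc (-Real.pi) Real.pi))

/-- The normalized Schatten 2-norm `‖A‖_{S₂} = √((Σ_i σ_i²)/N) = √(Re(Tr(A A†))/N)`
of a matrix `A ∈ ℂ^{N×M}`. -/
noncomputable def schattenTwo {N M : ℕ} (A : Matrix (Fin N) (Fin M) ℂ) : ℝ :=
  Real.sqrt ((A * Aᴴ).trace.re / N)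

section Hoeffding

lemma aux_ineq (p : ℝ) (hp0 : 0 ≤ p) (hp1 : p ≤ 1) (h : ℝ) :
    1 - p + p * rexp h ≤ rexp (p * h + h ^ 2 / 8) := by
  rcases eq_or_lt_of_le hp0 with rfl | hp
  · simpa using Real.one_le_exp (by positivity)
  have hq : ∀ x : ℝ, 0 < 1 - p + p * rexp x := fun x => by nlinarith [exp_pos x]
  set φ : ℝ → ℝ := fun x => p * x + x ^ 2 / 8 - Real.log (1 - p + p * rexp x) with hφ
  set ψ : ℝ → ℝ := fun x => p + x / 4 - p * rexp x / (1 - p + p * rexp x) with hψ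
  have hd1 : ∀ x, HasDerivAt φ (ψ x) x := by
    intro x
    have h1 : HasDerivAt (fun x : ℝ => p * x) p x := by
      simpa using (hasDerivAt_id x).const_mul p
    have h2 : HasDerivAt (fun x : ℝ => x ^ 2 / 8) (x / 4) x := by
      have := (hasDerivAt_pow 2 x).div_const 8
      exact this.congr_deriv (by norm_num; ring)
    have h3 : HasDerivAt (fun x : ℝ => 1 - p + p * rexp x) (p * rexp x) x := by
      simpa using ((Real.hasDerivAt_exp x).const_mul p).const_add (1 - p)
    have h4 := h3.log (ne_of_gt (hq x))
    exact (h1.add h2).sub h4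
  have hd2 : ∀ x, HasDerivAt ψ
      (1 / 4 - p * rexp x * (1 - p) / (1 - p + p * rexp x) ^ 2) x := by
    intro x
    have h3 : HasDerivAt (fun x : ℝ => 1 - p + p * rexp x) (p * rexp x) x := by
      simpa using ((Real.hasDerivAt_exp x).const_mul p).const_add (1 - p)
    have hu : HasDerivAt (fun x : ℝ => p * rexp x) (p * rexp x) x :=
      (Real.hasDerivAt_exp x).const_mul p
    have h5 := hu.div h3 (ne_of_gt (hq x))
    have h6 : HasDerivAt (fun x : ℝ => p + x / 4) (1 / 4) x := by
      simpa using ((hasDerivAt_id x).div_const 4).const_add p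
    have := h6.sub h5
    refine this.congr_deriv ?_
    field_simp
    ring
  have hψmono : Monotone ψ := by
    apply monotone_of_deriv_nonneg (fun x => (hd2 x).differentiableAt)
    intro x
    rw [(hd2 x).deriv]
    have hq' := hq x
    have he := exp_pos x
    have h4 : p * rexp x * (1 - p) / (1 - p + p * rexp x) ^ 2 ≤ 1 / 4 := by
      rw [div_le_iff₀ (by positivity)]
      nlinarith [sq_nonneg (p * rexp x - (1 - p))]
    linarith
  have hψ0 : ψ 0 = 0 := by
    simp only [hψ, Real.exp_zero, mul_one]
    have : 1 - p + p = 1 := by ring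
    rw [this]
    simp
  have hφ0 : φ 0 = 0 := by
    simp only [hφ, Real.exp_zero, mul_one, mul_zero]
    have : 1 - p + p = 1 := by ring
    rw [this]
    simp
  have hφdiff : Differentiable ℝ φ := fun x => (hd1 x).differentiableAt
  have key : 0 ≤ φ h := by
    rcases le_or_gt 0 h with hh | hh
    · have hmono : MonotoneOn φ (Set.Ici 0) := by
        apply monotoneOn_of_deriv_nonneg (convex_Ici 0) hφdiff.continuous.continuousOn
          (hφdiff.differentiableOn)
        intro x hx
        rw [(hd1 x).deriv]
        rw [interior_Ici, Set.mem_Ioi] at hx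
        calc (0:ℝ) = ψ 0 := hψ0.symm
        _ ≤ ψ x := hψmono (le_of_lt hx)
      have := hmono (Set.self_mem_Ici) (Set.mem_Ici.2 hh) hh
      linarith [hφ0 ▸ this]
    · have hanti : AntitoneOn φ (Set.Iic 0) := by
        apply antitoneOn_of_deriv_nonpos (convex_Iic 0) hφdiff.continuous.continuousOn
          (hφdiff.differentiableOn)
        intro x hx
        rw [(hd1 x).deriv]
        rw [interior_Iic, Set.mem_Iio] at hx
        have hx' : x < 0 := hx
        calc ψ x ≤ ψ 0 := hψmono (le_of_lt hx')
        _ = 0 := hψ0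
      have := hanti (Set.mem_Iic.2 (le_of_lt hh)) (Set.self_mem_Iic) (le_of_lt hh)
      linarith [hφ0 ▸ this]
  have hlog : Real.log (1 - p + p * rexp h) ≤ p * h + h ^ 2 / 8 := by
    simp only [hφ] at key; linarith
  calc 1 - p + p * rexp h = rexp (Real.log (1 - p + p * rexp h)) :=
        (Real.exp_log (hq h)).symm
    _ ≤ rexp (p * h + h ^ 2 / 8) := Real.exp_le_exp.2 hlog

lemma hoeffding_mgf {Ω : Type*} [MeasurableSpace Ω] (μ : Measure Ω) [IsProbabilityMeasure μ]
    (X : Ω → ℝ) (hX : Measurable X) (A B : ℝ) (hb : ∀ ω, X ω ∈ Set.Icc A B)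
    (hmean : ∫ ω, X ω ∂μ = 0) (t : ℝ) :
    mgf X μ t ≤ rexp (t ^ 2 * (B - A) ^ 2 / 8) := by
  have hne : Nonempty Ω := by
    by_contra hc
    rw [not_nonempty_iff] at hc
    have : (μ Set.univ) = 1 := measure_univ
    simp [Set.univ_eq_empty_iff.2 hc] at this
  obtain ⟨ω0⟩ := hne
  have hAB : A ≤ B := le_trans (hb ω0).1 (hb ω0).2
  -- integrability of X
  have hXint : Integrable X μ := by
    refine ⟨hX.aestronglyMeasurable, ?_⟩
    apply HasFiniteIntegral.of_bounded (C := max |A| |B|)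
    filter_upwards with ω
    rcases hb ω with ⟨h1, h2⟩
    rw [Real.norm_eq_abs, abs_le]
    constructor
    · exact le_trans (neg_le_neg (le_max_left |A| |B|)) (le_trans (neg_abs_le A) h1)
    · exact le_trans h2 (le_trans (le_abs_self B) (le_max_right |A| |B|))
  have hA0 : A ≤ 0 := by
    have : ∫ ω, (A : ℝ) ∂μ ≤ ∫ ω, X ω ∂μ :=
      integral_mono (integrable_const A) hXint (fun ω => (hb ω).1)
    simpa [hmean] using this
  have hB0 : 0 ≤ B := by
    have : ∫ ω, X ω ∂μ ≤ ∫ ω, (B : ℝ) ∂μ :=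
      integral_mono hXint (integrable_const B) (fun ω => (hb ω).2)
    simpa [hmean] using this
  rcases eq_or_lt_of_le hAB with rfl | hlt
  · -- A = B forces X = 0
    have hA : A = 0 := le_antisymm hA0 hB0
    subst hA
    have hX0 : ∀ ω, X ω = 0 := fun ω => le_antisymm (hb ω).2 (hb ω).1
    have : mgf X μ t = 1 := by
      rw [show X = fun _ => (0:ℝ) from funext hX0]
      simpa using mgf_const' 0 -- maybe
    rw [this]
    exact Real.one_le_exp (by positivity)
  -- pointwise convexity bound
  have hpoint : ∀ ω, rexp (t * X ω) ≤
      (B - X ω) / (B - A) * rexp (t * A) + (X ω - A) / (B - A) * rexp (t * B) := by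
    intro ω
    rcases hb ω with ⟨h1, h2⟩
    have hBA : (0:ℝ) < B - A := by linarith
    have ha : 0 ≤ (B - X ω) / (B - A) := by
      apply div_nonneg _ (le_of_lt hBA); linarith
    have hb' : 0 ≤ (X ω - A) / (B - A) := by
      apply div_nonneg _ (le_of_lt hBA); linarith
    have hab : (B - X ω) / (B - A) + (X ω - A) / (B - A) = 1 := by
      field_simp
      ring
    have := convexOn_exp.2 (Set.mem_univ (t * A)) (Set.mem_univ (t * B)) ha hb' hab
    have harg : (B - X ω) / (B - A) * (t * A) + (X ω - A) / (B - A) * (t * B) = t * X ω := by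
      field_simp
      ring
    simp only [smul_eq_mul] at this
    rw [harg] at this
    exact this
  -- integrate
  have hint1 : Integrable (fun ω => rexp (t * X ω)) μ := by
    refine ⟨(hX.const_mul t).exp.aestronglyMeasurable, ?_⟩
    apply HasFiniteIntegral.of_bounded (C := rexp (max (t*A) (t*B)))
    filter_upwards with ω
    rw [Real.norm_eq_abs, abs_of_pos (exp_pos _)]
    apply Real.exp_le_exp.2
    rcases le_or_gt 0 t with ht | ht
    · exact le_trans (mul_le_mul_of_nonneg_left (hb ω).2 ht) (le_max_right _ _)
    · exact le_trans (by nlinarith [(hb ω).1] : t * X ω ≤ t * A) (le_max_left _ _)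
  have hBA : (0:ℝ) < B - A := by linarith
  have hstep : mgf X μ t ≤ B / (B - A) * rexp (t * A) + (- A) / (B - A) * rexp (t * B) := by
    have hrhsint : Integrable (fun ω =>
        (B - X ω) / (B - A) * rexp (t * A) + (X ω - A) / (B - A) * rexp (t * B)) μ := by
      apply Integrable.add
      · exact ((((integrable_const B).sub hXint).div_const (B - A)).mul_const _)
      · exact (((hXint.sub (integrable_const A)).div_const (B - A)).mul_const _)
    have := integral_mono hint1 hrhsint hpoint
    rw [mgf]
    refine le_trans this (le_of_eq ?_)
    have heq : (fun ω => (B - X ω) / (B - A) * rexp (t * A) + (X ω - A) / (B - A) * rexp (t * B))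
        = fun ω => ((rexp (t * B) - rexp (t * A)) / (B - A)) * X ω
            + (B * rexp (t * A) - A * rexp (t * B)) / (B - A) := by
      funext ω
      field_simp
      ring
    rw [heq, integral_add (hXint.const_mul _) (integrable_const _),
      integral_const_mul, hmean, integral_const]
    simp only [mul_zero, zero_add, probReal_univ, ENNReal.toReal_one, smul_eq_mul, one_mul]
    field_simp
    ring
  set p : ℝ := -A / (B - A) with hp
  have hp0 : 0 ≤ p := by apply div_nonneg _ (le_of_lt hBA); linarith
  have hp1 : p ≤ 1 := by rw [div_le_one hBA]; linarith
  have hrw : B / (B - A) * rexp (t * A) + (- A) / (B - A) * rexp (t * B)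
      = rexp (t * A) * (1 - p + p * rexp (t * (B - A))) := by
    have e : rexp (t * B) = rexp (t * A) * rexp (t * (B - A)) := by
      rw [← Real.exp_add]; congr 1; ring
    rw [hp, e]
    field_simp
    ring
  have := aux_ineq p hp0 hp1 (t * (B - A))
  calc mgf X μ t ≤ rexp (t * A) * (1 - p + p * rexp (t * (B - A))) := by
        rw [← hrw]; exact hstep
    _ ≤ rexp (t * A) * rexp (p * (t * (B - A)) + (t * (B - A)) ^ 2 / 8) := by
        apply mul_le_mul_of_nonneg_left this (le_of_lt (exp_pos _))
    _ = rexp (t * A + p * (t * (B - A)) + (t * (B - A)) ^ 2 / 8) := by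
        rw [← Real.exp_add]; ring_nf
    _ = rexp (t ^ 2 * (B - A) ^ 2 / 8) := by
        congr 1
        rw [hp]
        field_simp
        ring

lemma tail_one {Ω : Type*} [MeasurableSpace Ω] (P : Measure Ω) [IsProbabilityMeasure P]
    {m : ℕ} (X : Fin m → Ω → ℝ) (hX : ∀ i, Measurable (X i))
    (hindep : iIndepFun X P)
    (A B : ℝ) (hA : A ≤ 0) (hB : 0 ≤ B) (hAB : B - A ≤ 2)
    (hb : ∀ i ω, X i ω ∈ Set.Icc A B) (hmean : ∀ i, ∫ ω, X i ω ∂P = 0)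
    (a : ℝ) (ha : 0 ≤ a) :
    (P {ω | (m : ℝ) * a ≤ ∑ i, X i ω}).toReal ≤ rexp (-(m : ℝ) * a ^ 2 / 2) := by
  have hSmeas : Measurable (∑ i, X i) := by
    have : (∑ i, X i) = fun ω => ∑ i, X i ω := by
      funext ω; simp [Finset.sum_apply]
    rw [this]
    exact Finset.measurable_sum Finset.univ (fun i _ => hX i)
  have hint : Integrable (fun ω => rexp (a * (∑ i, X i) ω)) P := by
    refine ⟨((hSmeas.const_mul a).exp).aestronglyMeasurable, ?_⟩
    apply HasFiniteIntegral.of_bounded (C := rexp (a * ((m : ℝ) * B)))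
    filter_upwards with ω
    rw [Real.norm_eq_abs, abs_of_pos (exp_pos _)]
    apply Real.exp_le_exp.2
    apply mul_le_mul_of_nonneg_left _ ha
    rw [Finset.sum_apply]
    calc ∑ i, X i ω ≤ ∑ _i : Fin m, B := Finset.sum_le_sum fun i _ => (hb i ω).2
      _ = (m : ℝ) * B := by simp [mul_comm]
  have hchern := measure_ge_le_exp_mul_mgf (X := ∑ i, X i) (μ := P) ((m : ℝ) * a) ha hint
  have hmgf : mgf (∑ i, X i) P a ≤ rexp ((m : ℝ) * a ^ 2 / 2) := by
    rw [show (∑ i, X i) = ∑ i ∈ Finset.univ, X i from rfl,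
      hindep.mgf_sum hX Finset.univ]
    calc ∏ i, mgf (X i) P a ≤ ∏ _i : Fin m, rexp (a ^ 2 * (B - A) ^ 2 / 8) := by
          apply Finset.prod_le_prod (fun i _ => mgf_nonneg)
          exact fun i _ => hoeffding_mgf P (X i) (hX i) A B (hb i) (hmean i) a
      _ = rexp ((m : ℝ) * (a ^ 2 * (B - A) ^ 2 / 8)) := by
          rw [Finset.prod_const, ← Real.exp_nat_mul]
          simp
      _ ≤ rexp ((m : ℝ) * a ^ 2 / 2) := by
          apply Real.exp_le_exp.2
          have h1 : (B - A) ^ 2 ≤ 4 := by nlinarith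
          have : a ^ 2 * (B - A) ^ 2 / 8 ≤ a ^ 2 / 2 := by nlinarith [sq_nonneg a]
          have hm : (0:ℝ) ≤ (m:ℝ) := Nat.cast_nonneg m
          nlinarith
  have hset : {ω | (m : ℝ) * a ≤ ∑ i, X i ω} = {ω | (m : ℝ) * a ≤ (∑ i, X i) ω} := by
    ext ω; simp [Finset.sum_apply]
  rw [hset]
  calc (P {ω | (m : ℝ) * a ≤ (∑ i, X i) ω}).toReal
      ≤ rexp (-a * ((m : ℝ) * a)) * mgf (∑ i, X i) P a := hchern
    _ ≤ rexp (-a * ((m : ℝ) * a)) * rexp ((m : ℝ) * a ^ 2 / 2) :=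
        mul_le_mul_of_nonneg_left hmgf (le_of_lt (exp_pos _))
    _ = rexp (-(m : ℝ) * a ^ 2 / 2) := by
        rw [← Real.exp_add]; congr 1; ring

end Hoeffding

section Orthogonality

lemma orth_zero (S : Finset ℕ) (hS : S.Nonempty) (T : ℕ → ℝ → ℝ)
    (hT : ∀ l ∈ S, T l = Real.cos ∨ T l = Real.sin) :
    ∫ θ in (-π)..π, ∏ l ∈ S, T l (2 ^ (l + 1) * θ) = 0 := by
  set f : ℝ → ℝ := fun θ => ∏ l ∈ S, T l (2 ^ (l + 1) * θ) with hf
  have hper : Function.Periodic f (2 * π) := by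
    intro θ
    apply Finset.prod_congr rfl
    intro l hl
    have harg : (2:ℝ) ^ (l + 1) * (θ + 2 * π) = 2 ^ (l + 1) * θ + (2 ^ (l+1) : ℤ) * (2 * π) := by
      push_cast; ring
    rcases hT l hl with h | h <;> rw [h, harg]
    · exact Real.cos_add_int_mul_two_pi _ _
    · exact Real.sin_add_int_mul_two_pi _ _
  set M := S.min' hS with hM
  set s : ℝ := π / 2 ^ (M + 1) with hs
  have hflip : ∀ θ, f (θ + s) = - f θ := by
    intro θ
    have hMem := S.min'_mem hS
    rw [hf]
    simp only
    rw [← Finset.mul_prod_erase S _ hMem, ← Finset.mul_prod_erase S (fun l => T l (2 ^ (l+1) * θ)) hMem]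
    have hhead : (2:ℝ) ^ (M + 1) * (θ + s) = 2 ^ (M + 1) * θ + π := by
      rw [hs]
      have : (2:ℝ) ^ (M+1) ≠ 0 := by positivity
      field_simp
    have hheadeq : T M (2 ^ (M + 1) * (θ + s)) = - T M (2 ^ (M + 1) * θ) := by
      rw [hhead]
      rcases hT M hMem with h | h <;> rw [h]
      · exact Real.cos_add_pi _
      · exact Real.sin_add_pi _
    have htail : ∀ l ∈ S.erase M, T l (2 ^ (l + 1) * (θ + s)) = T l (2 ^ (l + 1) * θ) := by
      intro l hl
      have hlS := Finset.mem_of_mem_erase hl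
      have hlM : M < l := lt_of_le_of_ne (S.min'_le l hlS) (Ne.symm (Finset.ne_of_mem_erase hl))
      have hexp : l + 1 = (l - M - 1) + 1 + (M + 1) := by omega
      have harg : (2:ℝ) ^ (l + 1) * (θ + s) =
          2 ^ (l + 1) * θ + ((2 ^ (l - M - 1) : ℤ)) * (2 * π) := by
        rw [hs]
        have h2 : (2:ℝ) ^ (l + 1) = 2 ^ (l - M - 1) * 2 * 2 ^ (M + 1) := by
          rw [hexp, pow_add, pow_add]
          ring
        have hne : (2:ℝ) ^ (M+1) ≠ 0 := by positivity
        push_cast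
        rw [h2]
        field_simp
      rcases hT l hlS with h | h <;> rw [h, harg]
      · exact Real.cos_add_int_mul_two_pi _ _
      · exact Real.sin_add_int_mul_two_pi _ _
    rw [Finset.prod_congr rfl htail, hheadeq]
    ring
  have e1 : ∫ θ in (-π)..π, f (θ + s) = ∫ θ in (-π + s)..(π + s), f θ :=
    intervalIntegral.integral_comp_add_right f s
  have e2 := hper.intervalIntegral_add_eq (-π + s) (-π)
  have b1 : -π + s + 2 * π = π + s := by ring
  have b2 : -π + 2 * π = π := by ring
  rw [b1, b2] at e2
  have e3 : ∫ θ in (-π)..π, f (θ + s) = ∫ θ in (-π)..π, (- f θ) :=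
    intervalIntegral.integral_congr (fun x _ => hflip x)
  rw [intervalIntegral.integral_neg] at e3
  have : ∫ θ in (-π)..π, f θ = - ∫ θ in (-π)..π, f θ := by
    rw [← e3, e1, e2]
  linarith

lemma integral_prod_eval (n : ℕ) (c : ℕ → ℝ) (e : ℕ → ℝ) (T : ℕ → ℝ → ℝ)
    (hT : ∀ l, T l = Real.cos ∨ T l = Real.sin) :
    ∫ θ in (-π)..π, ∏ l ∈ Finset.Icc 1 n, (c l + e l * T l (2 ^ (l + 1) * θ))
      = (2 * π) * ∏ l ∈ Finset.Icc 1 n, c l := by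
  have hTc : ∀ l, Continuous (T l) := by
    intro l; rcases hT l with h | h <;> rw [h]
    · exact Real.continuous_cos
    · exact Real.continuous_sin
  have hcont : ∀ (R : Finset ℕ), Continuous (fun θ : ℝ => ∏ l ∈ R, (e l * T l (2 ^ (l + 1) * θ))) := by
    intro R
    apply continuous_finset_prod
    intro l _
    exact continuous_const.mul ((hTc l).comp (continuous_const.mul continuous_id))
  have hexp : (fun θ : ℝ => ∏ l ∈ Finset.Icc 1 n, (c l + e l * T l (2 ^ (l + 1) * θ)))
      = fun θ => ∑ t ∈ (Finset.Icc 1 n).powerset,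
          (∏ l ∈ t, c l) * ∏ l ∈ (Finset.Icc 1 n) \ t, (e l * T l (2 ^ (l + 1) * θ)) := by
    funext θ
    exact Finset.prod_add _ _ _
  rw [hexp]
  rw [intervalIntegral.integral_finset_sum]
  swap
  · intro t _
    exact (continuous_const.mul (hcont _)).intervalIntegrable _ _
  rw [Finset.sum_eq_single_of_mem (Finset.Icc 1 n) (Finset.mem_powerset_self _)]
  · simp only [Finset.sdiff_self, Finset.prod_empty, mul_one]
    rw [intervalIntegral.integral_const]
    simp only [smul_eq_mul]
    ring_nf
  · intro t ht hne
    have htsub : t ⊆ Finset.Icc 1 n := Finset.mem_powerset.1 ht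
    have hnonempty : ((Finset.Icc 1 n) \ t).Nonempty := by
      rw [Finset.sdiff_nonempty]
      intro hsub
      exact hne (Finset.Subset.antisymm htsub hsub)
    have : (fun θ : ℝ => (∏ l ∈ t, c l) * ∏ l ∈ (Finset.Icc 1 n) \ t, (e l * T l (2 ^ (l + 1) * θ)))
        = fun θ => ((∏ l ∈ t, c l) * ∏ l ∈ (Finset.Icc 1 n) \ t, e l)
            * ∏ l ∈ (Finset.Icc 1 n) \ t, T l (2 ^ (l + 1) * θ) := by
      funext θ
      rw [Finset.prod_mul_distrib]
      ring
    rw [this, intervalIntegral.integral_const_mul,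
      orth_zero _ hnonempty T (fun l _ => hT l), mul_zero]

lemma uniform_integral_eq (g : ℝ → ℝ) :
    (∫ θ, g θ ∂uniformPiPi) = (2 * π)⁻¹ * ∫ θ in (-π)..π, g θ := by
  rw [uniformPiPi, MeasureTheory.integral_smul_measure, MeasureTheory.integral_Icc_eq_integral_Ioc,
    ← intervalIntegral.integral_of_le (by linarith [Real.pi_pos] : -π ≤ π)]
  rw [ENNReal.toReal_inv, ENNReal.toReal_ofReal (by positivity)]
  simp [smul_eq_mul]

lemma xvec_mul_eq (N : ℕ) (hN : 1 ≤ N) (j k : Fin N) (θ : ℝ) :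
    xvec N θ j * xvec N θ k
      = ((2:ℝ) ^ (Nat.clog 2 N) / N) * ((1/2) ^ (Nat.clog 2 N) *
          ∏ l ∈ Finset.Icc 1 (Nat.clog 2 N),
            ((if j.val / 2 ^ (Nat.clog 2 N - l) % 2 = k.val / 2 ^ (Nat.clog 2 N - l) % 2
                then (1:ℝ) else 0)
              + (if j.val / 2 ^ (Nat.clog 2 N - l) % 2 = 1 ∧ k.val / 2 ^ (Nat.clog 2 N - l) % 2 = 1
                  then (-1:ℝ) else 1)
                * (if j.val / 2 ^ (Nat.clog 2 N - l) % 2 = k.val / 2 ^ (Nat.clog 2 N - l) % 2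
                    then Real.cos else Real.sin) (2 ^ (l+1) * θ))) := by
  set n := Nat.clog 2 N with hn
  have hs : Real.sqrt ((2:ℝ)^n / N) * Real.sqrt ((2:ℝ)^n / N) = (2:ℝ)^n / N :=
    Real.mul_self_sqrt (by positivity)
  rw [xvec, xvec, ← hn]
  rw [show ∀ (s a b : ℝ), (s * a) * (s * b) = (s * s) * (a * b) from fun s a b => by ring, hs,
    ← Finset.prod_mul_distrib]
  congr 1
  have hfactor : ∀ l ∈ Finset.Icc 1 n,
      ((if j.val / 2 ^ (n - l) % 2 = 1 then Real.sin (2 ^ l * θ) else Real.cos (2 ^ l * θ)) *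
        (if k.val / 2 ^ (n - l) % 2 = 1 then Real.sin (2 ^ l * θ) else Real.cos (2 ^ l * θ)))
      = ((if j.val / 2 ^ (n - l) % 2 = k.val / 2 ^ (n - l) % 2 then (1:ℝ) else 0)
          + (if j.val / 2 ^ (n - l) % 2 = 1 ∧ k.val / 2 ^ (n - l) % 2 = 1 then (-1:ℝ) else 1)
            * (if j.val / 2 ^ (n - l) % 2 = k.val / 2 ^ (n - l) % 2
                then Real.cos else Real.sin) (2 ^ (l+1) * θ)) / 2 := by
    intro l _
    set u : ℝ := 2 ^ l * θ with hu
    have hdouble : (2:ℝ) ^ (l+1) * θ = 2 * u := by rw [hu, pow_succ]; ring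
    have hcs := Real.cos_sq u
    have hss := Real.sin_sq u
    rw [pow_two] at hcs hss
    by_cases h1 : j.val / 2 ^ (n - l) % 2 = 1 <;> by_cases h2 : k.val / 2 ^ (n - l) % 2 = 1
    · have h12 : j.val / 2 ^ (n - l) % 2 = k.val / 2 ^ (n - l) % 2 := h1.trans h2.symm
      rw [if_pos h1, if_pos h2, if_pos h12, if_pos ⟨h1, h2⟩, if_pos h12, hdouble]
      have := Real.cos_sq u
      linarith [hss, hcs]
    · have h12 : ¬ (j.val / 2 ^ (n - l) % 2 = k.val / 2 ^ (n - l) % 2) := by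
        rw [h1]; exact fun h => h2 h.symm
      rw [if_pos h1, if_neg h2, if_neg h12, if_neg (fun h => h2 h.2), if_neg h12, hdouble]
      have := Real.sin_two_mul u
      linarith
    · have h12 : ¬ (j.val / 2 ^ (n - l) % 2 = k.val / 2 ^ (n - l) % 2) := by
        rw [h2]; exact h1
      rw [if_neg h1, if_pos h2, if_neg h12, if_neg (fun h => h1 h.1), if_neg h12, hdouble]
      have := Real.sin_two_mul u
      linarith
    · have h12 : j.val / 2 ^ (n - l) % 2 = k.val / 2 ^ (n - l) % 2 := by
        rcases Nat.mod_two_eq_zero_or_one (j.val / 2 ^ (n - l)) with h | h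
        · rcases Nat.mod_two_eq_zero_or_one (k.val / 2 ^ (n - l)) with h' | h'
          · rw [h, h']
          · exact absurd h' h2
        · exact absurd h h1
      rw [if_neg h1, if_neg h2, if_pos h12, if_neg (fun h => h1 h.1), if_pos h12, hdouble]
      linarith
  rw [Finset.prod_congr rfl hfactor, Finset.prod_div_distrib, Finset.prod_const, Nat.card_Icc]
  simp only [Nat.add_sub_cancel]
  rw [one_div, inv_pow, div_eq_inv_mul]

lemma xvec_integral (N : ℕ) (hN : 1 ≤ N) (j k : Fin N) :
    ∫ θ, xvec N θ j * xvec N θ k ∂uniformPiPi = if j = k then 1 / (N : ℝ) else 0 := by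
  set n := Nat.clog 2 N with hn
  set c : ℕ → ℝ := fun l => if j.val / 2 ^ (n - l) % 2 = k.val / 2 ^ (n - l) % 2 then 1 else 0
    with hc
  set e : ℕ → ℝ := fun l => if j.val / 2 ^ (n - l) % 2 = 1 ∧ k.val / 2 ^ (n - l) % 2 = 1
      then (-1 : ℝ) else 1 with he
  set T : ℕ → ℝ → ℝ := fun l => if j.val / 2 ^ (n - l) % 2 = k.val / 2 ^ (n - l) % 2
      then Real.cos else Real.sin with hT
  have hTcs : ∀ l, T l = Real.cos ∨ T l = Real.sin := by
    intro l
    rw [hT]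
    simp only
    split_ifs <;> simp
  have hpoint : (fun θ => xvec N θ j * xvec N θ k)
      = fun θ => ((2:ℝ) ^ n / N) * ((1/2) ^ n *
          ∏ l ∈ Finset.Icc 1 n, (c l + e l * T l (2 ^ (l+1) * θ))) := by
    funext θ
    exact xvec_mul_eq N hN j k θ
  rw [show (∫ θ, xvec N θ j * xvec N θ k ∂uniformPiPi)
      = ∫ θ, (fun θ => xvec N θ j * xvec N θ k) θ ∂uniformPiPi from rfl, hpoint]
  rw [uniform_integral_eq, intervalIntegral.integral_const_mul, intervalIntegral.integral_const_mul,
    integral_prod_eval n c e T hTcs]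
  have hπ : (2:ℝ) * π ≠ 0 := by positivity
  have h2n : ((2:ℝ)^n) * (1/2)^n = 1 := by
    rw [one_div, inv_pow, mul_inv_cancel₀ (by positivity)]
  have hNne : (N:ℝ) ≠ 0 := by positivity
  have hsimp : (2 * π)⁻¹ * ((2:ℝ) ^ n / N * ((1/2) ^ n * (2 * π * ∏ l ∈ Finset.Icc 1 n, c l)))
      = (∏ l ∈ Finset.Icc 1 n, c l) / N := by
    field_simp
    rw [mul_comm, h2n, mul_one]
  rw [hsimp]
  by_cases hjk : j = k
  · subst hjk
    rw [if_pos rfl]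
    have : ∏ l ∈ Finset.Icc 1 n, c l = 1 := by
      apply Finset.prod_eq_one
      intro l _
      rw [hc]
      simp
    rw [this]
  · rw [if_neg hjk]
    have hNle : N ≤ 2 ^ n := Nat.le_pow_clog (by norm_num) N
    have hbit : ∃ l ∈ Finset.Icc 1 n, ¬ (j.val / 2 ^ (n - l) % 2 = k.val / 2 ^ (n - l) % 2) := by
      by_contra hcon
      push_neg at hcon
      apply hjk
      apply Fin.ext
      apply Nat.eq_of_testBit_eq
      intro r
      rcases lt_or_ge r n with hr | hr
      · have hl : n - r ∈ Finset.Icc 1 n := by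
          rw [Finset.mem_Icc]; omega
        have := hcon (n - r) hl
        have hnr : n - (n - r) = r := by omega
        rw [hnr] at this
        rw [Nat.testBit_eq_decide_div_mod_eq, Nat.testBit_eq_decide_div_mod_eq, this]
      · have h1 : j.val < 2 ^ r := lt_of_lt_of_le (lt_of_lt_of_le j.isLt hNle)
          (Nat.pow_le_pow_right (by norm_num) hr)
        have h2 : k.val < 2 ^ r := lt_of_lt_of_le (lt_of_lt_of_le k.isLt hNle)
          (Nat.pow_le_pow_right (by norm_num) hr)
        rw [Nat.testBit_lt_two_pow h1, Nat.testBit_lt_two_pow h2]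
    obtain ⟨l, hl, hlne⟩ := hbit
    rw [Finset.prod_eq_zero hl (by rw [hc]; simp only; rw [if_neg hlne]), zero_div]

end Orthogonality

section Pointwise

lemma sum_bits (n : ℕ) (w : ℕ → Bool → ℝ)
    (hw : ∀ l, w l false + w l true = 1) :
    ∑ i ∈ Finset.range (2 ^ n), ∏ l ∈ Finset.Icc 1 n, w l (decide (i / 2 ^ (n - l) % 2 = 1)) = 1 := by
  have hsymm : ∀ (a : Fin (2^n)) (r : Fin n),
      (((finFunctionFinEquiv (m := 2) (n := n)).symm a) r : ℕ) = (a : ℕ) / 2 ^ (r : ℕ) % 2 :=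
    fun a r => rfl
  have key : ∑ i : Fin (2 ^ n), ∏ r : Fin n, w (n - r.val) (decide (i.val / 2 ^ r.val % 2 = 1)) = 1 := by
    rw [← Equiv.sum_comp (finFunctionFinEquiv (m := 2) (n := n))]
    have hterm : ∀ g : Fin n → Fin 2,
        ∏ r : Fin n, w (n - r.val) (decide (((finFunctionFinEquiv g : Fin (2^n)) : ℕ) / 2 ^ r.val % 2 = 1))
          = ∏ r : Fin n, w (n - r.val) (decide ((g r).val = 1)) := by
      intro g
      apply Finset.prod_congr rfl
      intro r _
      have h1 := hsymm (finFunctionFinEquiv g) r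
      rw [Equiv.symm_apply_apply] at h1
      rw [← h1]
    rw [Finset.sum_congr rfl (fun g _ => hterm g)]
    rw [← Fintype.piFinset_univ,
      ← Finset.prod_univ_sum (fun _ : Fin n => (Finset.univ : Finset (Fin 2)))
        (fun r x => w (n - r.val) (decide (x.val = 1)))]
    apply Finset.prod_eq_one
    intro r _
    rw [show (Finset.univ : Finset (Fin 2)) = {0, 1} from rfl]
    rw [Finset.sum_insert (by simp), Finset.sum_singleton]
    simpa using hw (n - r.val)
  rw [← key, ← Finset.sum_range (fun i => ∏ r : Fin n, w (n - r) (decide (i / 2 ^ (r:ℕ) % 2 = 1)))]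
  apply Finset.sum_congr rfl
  intro i _
  rw [← Finset.prod_range (fun r => w (n - r) (decide (i / 2 ^ r % 2 = 1)))]
  apply Finset.prod_nbij' (fun l => n - l) (fun r => n - r)
  · intro l hl; simp only [Finset.mem_Icc] at hl; simp only [Finset.mem_range]; omega
  · intro r hr; simp only [Finset.mem_range] at hr; simp only [Finset.mem_Icc]; omega
  · intro l hl; simp only [Finset.mem_Icc] at hl; omega
  · intro r hr; simp only [Finset.mem_range] at hr; omega
  · intro l hl
    simp only [Finset.mem_Icc] at hl
    congr 2
    omega

lemma two_pow_clog_le (N : ℕ) (hN : 1 ≤ N) : (2:ℕ) ^ (Nat.clog 2 N) ≤ 2 * N := by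
  rcases eq_or_lt_of_le hN with h1 | h1
  · rw [← h1]
    simp [Nat.clog_one_right]
  · have h := Nat.pow_pred_clog_lt_self (b := 2) one_lt_two h1
    rcases Nat.eq_zero_or_pos (Nat.clog 2 N) with h0 | h0
    · rw [h0]; omega
    · have h2 : (2:ℕ) ^ (Nat.clog 2 N) = 2 * 2 ^ (Nat.clog 2 N - 1) := by
        conv_lhs => rw [show Nat.clog 2 N = (Nat.clog 2 N - 1) + 1 by omega]
        rw [pow_succ]
        ring
      rw [h2]
      have : (2:ℕ) ^ (Nat.clog 2 N - 1) ≤ N := le_of_lt (by simpa [Nat.pred_eq_sub_one] using h)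
      omega

lemma xvec_sq_sum_le (N : ℕ) (hN : 1 ≤ N) (θ : ℝ) :
    ∑ i : Fin N, (xvec N θ i) ^ 2 ≤ 2 := by
  set n := Nat.clog 2 N with hn
  set w : ℕ → Bool → ℝ := fun l b =>
    (if b then Real.sin (2 ^ l * θ) else Real.cos (2 ^ l * θ)) ^ 2 with hwdef
  have hw1 : ∀ l, w l false + w l true = 1 := by
    intro l
    simp only [hwdef, if_true, if_false, Bool.false_eq_true]
    rw [add_comm]
    exact Real.sin_sq_add_cos_sq _
  have hwnonneg : ∀ l b, 0 ≤ w l b := fun l b => sq_nonneg _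
  have hNpos : (0:ℝ) < N := by exact_mod_cast hN
  have hsq : ∀ i : Fin N, (xvec N θ i) ^ 2
      = ((2:ℝ) ^ n / N) * ∏ l ∈ Finset.Icc 1 n, w l (decide (i.val / 2 ^ (n - l) % 2 = 1)) := by
    intro i
    rw [xvec, ← hn, mul_pow, Real.sq_sqrt (by positivity), ← Finset.prod_pow]
    congr 1
    apply Finset.prod_congr rfl
    intro l _
    by_cases h : i.val / 2 ^ (n - l) % 2 = 1 <;> simp [hwdef, h]
  rw [Finset.sum_congr rfl (fun i _ => hsq i), ← Finset.mul_sum]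
  have hkey : ∑ i : Fin N, ∏ l ∈ Finset.Icc 1 n, w l (decide (i.val / 2 ^ (n - l) % 2 = 1)) ≤ 1 := by
    rw [Fin.sum_univ_eq_sum_range
      (fun v => ∏ l ∈ Finset.Icc 1 n, w l (decide (v / 2 ^ (n - l) % 2 = 1))) N]
    calc ∑ v ∈ Finset.range N, ∏ l ∈ Finset.Icc 1 n, w l (decide (v / 2 ^ (n - l) % 2 = 1))
        ≤ ∑ v ∈ Finset.range (2 ^ n), ∏ l ∈ Finset.Icc 1 n, w l (decide (v / 2 ^ (n - l) % 2 = 1)) := by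
          apply Finset.sum_le_sum_of_subset_of_nonneg
          · exact Finset.range_subset_range.2 (Nat.le_pow_clog one_lt_two N)
          · intro v _ _
            exact Finset.prod_nonneg fun l _ => hwnonneg l _
      _ = 1 := sum_bits n w hw1
  calc ((2:ℝ) ^ n / N) * ∑ i : Fin N, ∏ l ∈ Finset.Icc 1 n, w l (decide (i.val / 2 ^ (n - l) % 2 = 1))
      ≤ ((2:ℝ) ^ n / N) * 1 := by
        apply mul_le_mul_of_nonneg_left hkey (by positivity)
    _ ≤ 2 := by
        rw [mul_one, div_le_iff₀ hNpos]
        have := two_pow_clog_le N hN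
        exact_mod_cast this

lemma sqrt_step (S t0 ε : ℝ) (hS : 0 ≤ S) (ht0 : 0 ≤ t0) (hε : 0 < ε)
    (h : |S - t0 ^ 2| ≤ ε * max ε t0) : |Real.sqrt S - t0| ≤ ε := by
  rw [abs_le] at h ⊢
  have hmax_le : max ε t0 ≤ ε + t0 := max_le (by linarith) (by linarith)
  constructor
  · rcases le_or_gt t0 ε with hc | hc
    · have := Real.sqrt_nonneg S
      linarith
    · have hmax : max ε t0 = t0 := max_eq_right (le_of_lt hc)
      rw [hmax] at h
      have h2 : (t0 - ε) ^ 2 ≤ S := by nlinarith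
      have h3 := Real.sqrt_le_sqrt h2
      rw [Real.sqrt_sq (by linarith)] at h3
      linarith
  · have h2 : S ≤ (t0 + ε) ^ 2 := by nlinarith [max_le_iff.1 (le_refl (max ε t0))]
    have h3 := Real.sqrt_le_sqrt h2
    rw [Real.sqrt_sq (by linarith)] at h3
    linarith

lemma xvec_continuous (N : ℕ) (i : Fin N) : Continuous (fun θ => xvec N θ i) := by
  apply Continuous.mul continuous_const
  apply continuous_finset_prod
  intro l _
  by_cases h : i.val / 2 ^ (Nat.clog 2 N - l) % 2 = 1
  · simp only [if_pos h]
    exact Real.continuous_sin.comp (continuous_const.mul continuous_id)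
  · simp only [if_neg h]
    exact Real.continuous_cos.comp (continuous_const.mul continuous_id)

lemma integrable_uniformPiPi (g : ℝ → ℝ) (hg : Continuous g) : Integrable g uniformPiPi := by
  rw [uniformPiPi]
  apply Integrable.smul_measure
  · exact hg.integrableOn_Icc
  · exact ENNReal.inv_ne_top.2 (by positivity)

instance : IsProbabilityMeasure uniformPiPi := by
  constructor
  rw [uniformPiPi]
  rw [Measure.smul_apply, Measure.restrict_apply MeasurableSet.univ, Set.univ_inter,
    Real.volume_Icc]
  rw [show π - (-π) = 2 * π by ring]
  rw [smul_eq_mul]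
  exact ENNReal.inv_mul_cancel (by positivity) ENNReal.ofReal_ne_top

lemma integrable_bdd {Ω : Type*} [MeasurableSpace Ω] (P : Measure Ω) [IsFiniteMeasure P]
    (f : Ω → ℝ) (hf : Measurable f) (C : ℝ) (hC : ∀ ω, |f ω| ≤ C) : Integrable f P :=
  ⟨hf.aestronglyMeasurable,
    HasFiniteIntegral.of_bounded (C := C) (Filter.Eventually.of_forall hC)⟩

end Pointwise

section Quadratic

lemma sum_mulVec {N K : ℕ} (M : Fin K → Matrix (Fin N) (Fin N) ℂ) (v : Fin N → ℂ) :
    (∑ κ, M κ).mulVec v = ∑ κ, (M κ).mulVec v := by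
  ext i
  simp only [Matrix.mulVec, dotProduct, Finset.sum_apply, Finset.sum_fn]
  rw [Finset.sum_comm]
  congr 1
  funext k
  rw [Matrix.sum_apply]
  simp [Finset.sum_mul]

lemma dot_normSq {N : ℕ} (w : Fin N → ℂ) :
    dotProduct (star w) w = ((∑ i, Complex.normSq (w i) : ℝ) : ℂ) := by
  rw [dotProduct]
  push_cast
  apply Finset.sum_congr rfl
  intro i _
  rw [Pi.star_apply, Complex.star_def, mul_comm, Complex.mul_conj]

lemma quad_eq {N : ℕ} (A : Matrix (Fin N) (Fin N) ℂ) (x : Fin N → ℝ) :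
    (∑ j, ∑ k, (x j : ℂ) * (A * Aᴴ) j k * (x k : ℂ))
      = ((∑ i, Complex.normSq ((Aᴴ.mulVec (fun r => (x r : ℂ))) i) : ℝ) : ℂ) := by
  set v : Fin N → ℂ := fun r => (x r : ℂ) with hv
  have hvstar : star v = v := by
    funext r
    rw [Pi.star_apply, hv, Complex.star_def, Complex.conj_ofReal]
  have h1 : (∑ j, ∑ k, v j * (A * Aᴴ) j k * v k) = dotProduct v ((A * Aᴴ).mulVec v) := by
    rw [dotProduct]
    apply Finset.sum_congr rfl
    intro j _
    rw [Matrix.mulVec, dotProduct, Finset.mul_sum]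
    apply Finset.sum_congr rfl
    intro k _
    ring
  rw [h1, show v ⬝ᵥ ((A * Aᴴ) *ᵥ v) = star v ⬝ᵥ ((A * Aᴴ) *ᵥ v) by rw [hvstar]]
  rw [← Matrix.mulVec_mulVec, dotProduct_mulVec, ← dot_normSq]
  congr 1
  rw [Matrix.star_mulVec, Matrix.conjTranspose_conjTranspose, hvstar]

lemma quad_form_bounds {N K : ℕ} (U : Fin K → Matrix (Fin N) (Fin N) ℂ)
    (hU : ∀ κ, U κ ∈ Matrix.unitaryGroup (Fin N) ℂ)
    (α : Fin K → ℂ) (hα : ∑ κ, ‖α κ‖ ≤ 1)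
    (Ut : Matrix (Fin N) (Fin N) ℂ) (hUt : Ut = ∑ κ, α κ • U κ)
    (x : Fin N → ℝ) :
    0 ≤ (∑ j, ∑ k, (x j : ℂ) * (Ut * Utᴴ) j k * (x k : ℂ)).re ∧
    (∑ j, ∑ k, (x j : ℂ) * (Ut * Utᴴ) j k * (x k : ℂ)).re ≤ ∑ j, (x j)^2 := by
  set v : Fin N → ℂ := fun r => (x r : ℂ) with hv
  have hre : (∑ j, ∑ k, (x j : ℂ) * (Ut * Utᴴ) j k * (x k : ℂ)).re
      = ∑ i, Complex.normSq ((Utᴴ.mulVec v) i) := by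
    rw [quad_eq Ut x, Complex.ofReal_re]
  rw [hre]
  constructor
  · exact Finset.sum_nonneg fun i _ => Complex.normSq_nonneg _
  -- Euclidean space argument
  set L := (WithLp.linearEquiv 2 ℂ (Fin N → ℂ)).symm with hL
  have happly : ∀ (w : Fin N → ℂ) (i : Fin N), (L w) i = w i := fun w i => rfl
  have hnorm : ∀ w : Fin N → ℂ, ‖(L w : EuclideanSpace ℂ (Fin N))‖ ^ 2
      = ∑ i, Complex.normSq (w i) := by
    intro w
    rw [EuclideanSpace.norm_eq, Real.sq_sqrt (Finset.sum_nonneg fun i _ => sq_nonneg _)]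
    apply Finset.sum_congr rfl
    intro i _
    rw [happly, ← Complex.sq_norm]
  -- per-kappa isometry
  have hiso : ∀ κ, ∑ i, Complex.normSq (((U κ)ᴴ.mulVec v) i) = ∑ i, Complex.normSq (v i) := by
    intro κ
    have h1 := quad_eq (U κ) x
    have hunit : U κ * (U κ)ᴴ = 1 := by
      rw [← Matrix.star_eq_conjTranspose]
      exact (Matrix.mem_unitaryGroup_iff.1 (hU κ))
    rw [hunit] at h1
    have h2 : (∑ j, ∑ k, (x j : ℂ) * (1 : Matrix (Fin N) (Fin N) ℂ) j k * (x k : ℂ))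
        = ((∑ i, Complex.normSq (v i) : ℝ) : ℂ) := by
      have : ∀ j : Fin N, ∑ k, (x j : ℂ) * (1 : Matrix (Fin N) (Fin N) ℂ) j k * (x k : ℂ)
          = ((Complex.normSq (v j) : ℝ) : ℂ) := by
        intro j
        rw [Finset.sum_eq_single j]
        · rw [Matrix.one_apply_eq]
          rw [hv]
          push_cast
          rw [Complex.normSq_ofReal]
          push_cast
          ring
        · intro k _ hk
          rw [Matrix.one_apply_ne (Ne.symm hk)]
          ring
        · intro h; exact absurd (Finset.mem_univ j) h
      rw [Finset.sum_congr rfl (fun j _ => this j)]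
      push_cast
      ring
    rw [h2] at h1
    have := congrArg Complex.re h1
    rw [Complex.ofReal_re, Complex.ofReal_re] at this
    exact this.symm
  have hUtT : Utᴴ.mulVec v = ∑ κ, (starRingEnd ℂ) (α κ) • ((U κ)ᴴ.mulVec v) := by
    rw [hUt, Matrix.conjTranspose_sum]
    have : ∀ κ, ((α κ • U κ)ᴴ : Matrix (Fin N) (Fin N) ℂ) = (starRingEnd ℂ) (α κ) • (U κ)ᴴ := by
      intro κ
      rw [Matrix.conjTranspose_smul]
      rfl
    rw [Finset.sum_congr rfl (fun κ _ => this κ), _root_.sum_mulVec]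
    apply Finset.sum_congr rfl
    intro κ _
    rw [Matrix.smul_mulVec]
  have hnormy : ‖(L (Utᴴ.mulVec v) : EuclideanSpace ℂ (Fin N))‖ ≤ ‖(L v : EuclideanSpace ℂ (Fin N))‖ := by
    rw [hUtT, map_sum]
    calc ‖(∑ κ, L ((starRingEnd ℂ) (α κ) • ((U κ)ᴴ.mulVec v)) : EuclideanSpace ℂ (Fin N))‖
        ≤ ∑ κ, ‖(L ((starRingEnd ℂ) (α κ) • ((U κ)ᴴ.mulVec v)) : EuclideanSpace ℂ (Fin N))‖ :=
          norm_sum_le _ _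
      _ = ∑ κ, ‖α κ‖ * ‖(L ((U κ)ᴴ.mulVec v) : EuclideanSpace ℂ (Fin N))‖ := by
          apply Finset.sum_congr rfl
          intro κ _
          rw [_root_.map_smul, norm_smul, RCLike.norm_conj]
      _ = ∑ κ, ‖α κ‖ * ‖(L v : EuclideanSpace ℂ (Fin N))‖ := by
          apply Finset.sum_congr rfl
          intro κ _
          congr 1
          rw [← Real.sqrt_sq (norm_nonneg _), ← Real.sqrt_sq (norm_nonneg (L v : EuclideanSpace ℂ (Fin N)))]
          rw [hnorm, hnorm, hiso κ]
      _ = (∑ κ, ‖α κ‖) * ‖(L v : EuclideanSpace ℂ (Fin N))‖ := by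
          rw [Finset.sum_mul]
      _ ≤ 1 * ‖(L v : EuclideanSpace ℂ (Fin N))‖ :=
          mul_le_mul_of_nonneg_right hα (norm_nonneg _)
      _ = ‖(L v : EuclideanSpace ℂ (Fin N))‖ := one_mul _
  have hfinal : ∑ i, Complex.normSq ((Utᴴ.mulVec v) i) ≤ ∑ i, Complex.normSq (v i) := by
    rw [← hnorm, ← hnorm]
    exact pow_le_pow_left₀ (norm_nonneg _) hnormy 2
  refine le_trans hfinal (le_of_eq ?_)
  apply Finset.sum_congr rfl
  intro i _
  rw [hv]
  simp only
  rw [Complex.normSq_ofReal, sq]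

end Quadratic

/-- **Theorem 3.** Let `Ũ = Σ_κ α_κ U_κ` be a mixed quantum operation
(each `U_κ` unitary, `Σ_κ |α_κ| ≤ 1`).  Let `ε > 0`, `δ ∈ (0,1)` and
`m ≥ 2 log(2/δ)/(ε² max{ε,‖Ũ‖_{S₂}}²)`.  If `θ₁,…,θ_m` are i.i.d. uniform on `[−π, π]`,
then with probability at least `1 − δ`,
`|√((1/m) Σ_i ⟨x(θ_i), Ũ Ũ† x(θ_i)⟩) − ‖Ũ‖_{S₂}| ≤ ε`. -/
theorem stmt_10 {Ω : Type*} [MeasurableSpace Ω] (P : Measure Ω) [IsProbabilityMeasure P]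
    (N K : ℕ) (hN : 1 ≤ N)
    (U : Fin K → Matrix (Fin N) (Fin N) ℂ)
    (hU : ∀ κ, U κ ∈ Matrix.unitaryGroup (Fin N) ℂ)
    (α : Fin K → ℂ) (hα : ∑ κ, ‖α κ‖ ≤ 1)
    (Ut : Matrix (Fin N) (Fin N) ℂ) (hUt : Ut = ∑ κ, α κ • U κ)
    (ε δ : ℝ) (hε : 0 < ε) (hδ : δ ∈ Set.Ioo (0 : ℝ) 1)
    (m : ℕ) (hm : 2 * Real.log (2 / δ) / (ε ^ 2 * (max ε (schattenTwo Ut)) ^ 2) ≤ (m : ℝ))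
    (θ : Fin m → Ω → ℝ) (hmeas : ∀ i, Measurable (θ i))
    (hindep : iIndepFun θ P)
    (hdist : ∀ i, Measure.map (θ i) P = uniformPiPi) :
    ENNReal.ofReal (1 - δ) ≤
      P {ω | |Real.sqrt ((m : ℝ)⁻¹ * ∑ i,
            (∑ j, ∑ k, (xvec N (θ i ω) j : ℂ) * (Ut * Utᴴ) j k * (xvec N (θ i ω) k : ℂ)).re)
          - schattenTwo Ut| ≤ ε} := by
  obtain ⟨hδ0, hδ1⟩ := hδ
  set Y : ℝ → ℝ := fun ϑ =>
    (∑ j, ∑ k, (xvec N ϑ j : ℂ) * (Ut * Utᴴ) j k * (xvec N ϑ k : ℂ)).re with hYdef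
  have hYcont : Continuous Y := by
    apply Complex.continuous_re.comp
    apply continuous_finset_sum
    intro j _
    apply continuous_finset_sum
    intro k _
    exact ((Complex.continuous_ofReal.comp (xvec_continuous N j)).mul continuous_const).mul
      (Complex.continuous_ofReal.comp (xvec_continuous N k))
  have hY0 : ∀ ϑ, 0 ≤ Y ϑ := fun ϑ =>
    (quad_form_bounds U hU α hα Ut hUt (fun r => xvec N ϑ r)).1
  have hY2 : ∀ ϑ, Y ϑ ≤ 2 := fun ϑ =>
    le_trans (quad_form_bounds U hU α hα Ut hUt (fun r => xvec N ϑ r)).2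
      (xvec_sq_sum_le N hN ϑ)
  set μb : ℝ := (Ut * Utᴴ).trace.re / N with hμbdef
  -- expectation of Y
  have hYexpand : ∀ ϑ, Y ϑ = ∑ j, ∑ k, ((Ut * Utᴴ) j k).re * (xvec N ϑ j * xvec N ϑ k) := by
    intro ϑ
    rw [hYdef]
    simp only
    rw [Complex.re_sum]
    apply Finset.sum_congr rfl
    intro j _
    rw [Complex.re_sum]
    apply Finset.sum_congr rfl
    intro k _
    rw [show ((xvec N ϑ j : ℂ) * (Ut * Utᴴ) j k * (xvec N ϑ k : ℂ))
        = ((xvec N ϑ j * xvec N ϑ k : ℝ) : ℂ) * (Ut * Utᴴ) j k by push_cast; ring]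
    rw [Complex.re_ofReal_mul]
    ring
  have hintjk : ∀ j k : Fin N,
      Integrable (fun ϑ => ((Ut * Utᴴ) j k).re * (xvec N ϑ j * xvec N ϑ k)) uniformPiPi :=
    fun j k => integrable_uniformPiPi _
      (continuous_const.mul ((xvec_continuous N j).mul (xvec_continuous N k)))
  have hEY : ∫ ϑ, Y ϑ ∂uniformPiPi = μb := by
    rw [show (fun ϑ => Y ϑ) = fun ϑ => ∑ j, ∑ k, ((Ut * Utᴴ) j k).re * (xvec N ϑ j * xvec N ϑ k)
      from funext hYexpand]
    rw [integral_finset_sum _ (fun j _ => integrable_finset_sum _ (fun k _ => hintjk j k))]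
    have hinner : ∀ j : Fin N,
        ∫ ϑ, ∑ k, ((Ut * Utᴴ) j k).re * (xvec N ϑ j * xvec N ϑ k) ∂uniformPiPi
          = ∑ k, ((Ut * Utᴴ) j k).re * ∫ ϑ, xvec N ϑ j * xvec N ϑ k ∂uniformPiPi := by
      intro j
      rw [integral_finset_sum _ (fun k _ => hintjk j k)]
      exact Finset.sum_congr rfl fun k _ => integral_const_mul _ _
    rw [Finset.sum_congr rfl (fun j _ => hinner j)]
    have hjk : ∀ j k : Fin N, ((Ut * Utᴴ) j k).re * (∫ ϑ, xvec N ϑ j * xvec N ϑ k ∂uniformPiPi)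
        = if j = k then ((Ut * Utᴴ) j j).re / N else 0 := by
      intro j k
      rw [xvec_integral N hN j k]
      by_cases h : j = k
      · subst h
        rw [if_pos rfl, if_pos rfl]
        ring
      · rw [if_neg h, if_neg h, mul_zero]
    rw [Finset.sum_congr rfl (fun j _ => Finset.sum_congr rfl (fun k _ => hjk j k))]
    simp only [Finset.sum_ite_eq, Finset.mem_univ, if_true]
    rw [hμbdef, Matrix.trace, Complex.re_sum, Finset.sum_div]
    rfl
  have hμb0 : 0 ≤ μb := hEY ▸ integral_nonneg hY0
  have hμb2 : μb ≤ 2 := by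
    rw [← hEY]
    calc ∫ ϑ, Y ϑ ∂uniformPiPi ≤ ∫ _ϑ, (2:ℝ) ∂uniformPiPi :=
          integral_mono (integrable_uniformPiPi Y hYcont) (integrable_const 2) hY2
      _ = 2 := by simp
  set t0 : ℝ := schattenTwo Ut with ht0def
  have ht00 : 0 ≤ t0 := Real.sqrt_nonneg _
  have ht0sq : t0 ^ 2 = μb := by
    rw [ht0def, schattenTwo, Real.sq_sqrt]
    exact hμb0
  have hmaxpos : 0 < max ε t0 := lt_of_lt_of_le hε (le_max_left _ _)
  set a : ℝ := ε * max ε t0 with hadef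
  have hapos : 0 < a := mul_pos hε hmaxpos
  have hlog : 0 < Real.log (2 / δ) := Real.log_pos (by rw [lt_div_iff₀ hδ0]; linarith)
  have hmpos : 0 < (m : ℝ) := lt_of_lt_of_le (by positivity) hm
  have hma : 2 * Real.log (2 / δ) ≤ (m : ℝ) * a ^ 2 := by
    have h1 : a ^ 2 = ε ^ 2 * (max ε t0) ^ 2 := by rw [hadef]; ring
    have hd : (0:ℝ) < ε ^ 2 * (max ε t0) ^ 2 := by positivity
    rw [h1]
    calc 2 * Real.log (2 / δ)
        = (2 * Real.log (2 / δ) / (ε ^ 2 * (max ε t0) ^ 2)) * (ε ^ 2 * (max ε t0) ^ 2) := by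
          field_simp
      _ ≤ (m : ℝ) * (ε ^ 2 * (max ε t0) ^ 2) := mul_le_mul_of_nonneg_right hm (le_of_lt hd)
  have hexp_le : rexp (-(m : ℝ) * a ^ 2 / 2) ≤ δ / 2 := by
    have h1 : -(m : ℝ) * a ^ 2 / 2 ≤ -Real.log (2 / δ) := by linarith
    calc rexp (-(m : ℝ) * a ^ 2 / 2) ≤ rexp (-Real.log (2 / δ)) := exp_le_exp.2 h1
      _ = δ / 2 := by rw [Real.exp_neg, Real.exp_log (by positivity), inv_div]
  -- the shifted random variables
  set X : Fin m → Ω → ℝ := fun i => (fun r => Y r - μb) ∘ θ i with hXdef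
  set X' : Fin m → Ω → ℝ := fun i => (fun r => μb - Y r) ∘ θ i with hX'def
  have hXval : ∀ i ω, X i ω = Y (θ i ω) - μb := fun i ω => rfl
  have hX'val : ∀ i ω, X' i ω = μb - Y (θ i ω) := fun i ω => rfl
  have hXmeas : ∀ i, Measurable (X i) :=
    fun i => (hYcont.measurable.sub measurable_const).comp (hmeas i)
  have hX'meas : ∀ i, Measurable (X' i) :=
    fun i => (measurable_const.sub hYcont.measurable).comp (hmeas i)
  have hXindep : iIndepFun X P :=
    hindep.comp (fun _ => fun r => Y r - μb)
      (fun _ => hYcont.measurable.sub measurable_const)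
  have hX'indep : iIndepFun X' P :=
    hindep.comp (fun _ => fun r => μb - Y r)
      (fun _ => measurable_const.sub hYcont.measurable)
  have hXbdd : ∀ i ω, X i ω ∈ Set.Icc (-μb) (2 - μb) := by
    intro i ω
    rw [Set.mem_Icc, hXval]
    constructor
    · linarith [hY0 (θ i ω)]
    · linarith [hY2 (θ i ω)]
  have hX'bdd : ∀ i ω, X' i ω ∈ Set.Icc (μb - 2) μb := by
    intro i ω
    rw [Set.mem_Icc, hX'val]
    constructor
    · linarith [hY2 (θ i ω)]
    · linarith [hY0 (θ i ω)]
  have hYint : ∀ i, Integrable (fun ω => Y (θ i ω)) P := fun i =>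
    integrable_bdd P _ (hYcont.measurable.comp (hmeas i)) 2
      (fun ω => abs_le.2 ⟨by linarith [hY0 (θ i ω)], hY2 _⟩)
  have hEtheta : ∀ i, ∫ ω, Y (θ i ω) ∂P = μb := by
    intro i
    calc ∫ ω, Y (θ i ω) ∂P = ∫ r, Y r ∂(Measure.map (θ i) P) :=
          (integral_map (hmeas i).aemeasurable hYcont.aestronglyMeasurable).symm
      _ = ∫ r, Y r ∂uniformPiPi := by rw [hdist i]
      _ = μb := hEY
  have hXmean : ∀ i, ∫ ω, X i ω ∂P = 0 := by
    intro i
    simp only [hXval]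
    rw [integral_sub (hYint i) (integrable_const μb), hEtheta i, integral_const]
    simp
  have hX'mean : ∀ i, ∫ ω, X' i ω ∂P = 0 := by
    intro i
    simp only [hX'val]
    rw [integral_sub (integrable_const μb) (hYint i), hEtheta i, integral_const]
    simp
  -- tail bounds
  have h1 := tail_one P X hXmeas hXindep (-μb) (2 - μb) (by linarith) (by linarith)
    (by linarith) hXbdd hXmean a hapos.le
  have h2 := tail_one P X' hX'meas hX'indep (μb - 2) μb (by linarith) hμb0
    (by linarith) hX'bdd hX'mean a hapos.le
  set B1 : Set Ω := {ω | (m : ℝ) * a ≤ ∑ i, X i ω} with hB1def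
  set B2 : Set Ω := {ω | (m : ℝ) * a ≤ ∑ i, X' i ω} with hB2def
  have hPB1 : P B1 ≤ ENNReal.ofReal (δ / 2) := by
    rw [ENNReal.le_ofReal_iff_toReal_le (measure_ne_top P B1) (by linarith)]
    exact le_trans h1 hexp_le
  have hPB2 : P B2 ≤ ENNReal.ofReal (δ / 2) := by
    rw [ENNReal.le_ofReal_iff_toReal_le (measure_ne_top P B2) (by linarith)]
    exact le_trans h2 hexp_le
  set G : Set Ω := {ω | |Real.sqrt ((m : ℝ)⁻¹ * ∑ i, Y (θ i ω)) - t0| ≤ ε} with hGdef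
  have hGmeas : MeasurableSet G := by
    have hf : Measurable fun ω => |Real.sqrt ((m : ℝ)⁻¹ * ∑ i, Y (θ i ω)) - t0| := by
      apply (continuous_abs.measurable).comp
      apply Measurable.sub _ measurable_const
      apply (Real.continuous_sqrt.measurable).comp
      apply Measurable.const_mul
      exact Finset.measurable_sum Finset.univ (fun i _ => hYcont.measurable.comp (hmeas i))
    exact measurableSet_le hf measurable_const
  have hsub : Gᶜ ⊆ B1 ∪ B2 := by
    intro ω hω
    by_contra hnot
    rw [Set.mem_union] at hnot
    push_neg at hnot
    obtain ⟨hn1, hn2⟩ := hnot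
    apply hω
    rw [hB1def, Set.mem_setOf_eq, not_le] at hn1
    rw [hB2def, Set.mem_setOf_eq, not_le] at hn2
    have hsum1 : ∑ i, X i ω = (∑ i, Y (θ i ω)) - m * μb := by
      simp only [hXval]
      rw [Finset.sum_sub_distrib, Finset.sum_const, Finset.card_univ, Fintype.card_fin]
      simp [nsmul_eq_mul]
    have hsum2 : ∑ i, X' i ω = m * μb - (∑ i, Y (θ i ω)) := by
      simp only [hX'val]
      rw [Finset.sum_sub_distrib, Finset.sum_const, Finset.card_univ, Fintype.card_fin]
      simp [nsmul_eq_mul]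
    rw [hsum1] at hn1
    rw [hsum2] at hn2
    set S : ℝ := (m : ℝ)⁻¹ * ∑ i, Y (θ i ω) with hSdef
    have hS0 : 0 ≤ S := by
      apply mul_nonneg (inv_nonneg.2 hmpos.le)
      exact Finset.sum_nonneg fun i _ => hY0 _
    have hdiff : |S - t0 ^ 2| ≤ ε * max ε t0 := by
      rw [ht0sq]
      rw [abs_le]
      have hmne : (m : ℝ) ≠ 0 := hmpos.ne'
      constructor
      · have : S - μb = (m : ℝ)⁻¹ * ((∑ i, Y (θ i ω)) - m * μb) := by
          rw [hSdef]
          field_simp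
        rw [this]
        have h3 : -((m:ℝ) * a) < (∑ i, Y (θ i ω)) - m * μb := by linarith
        have := mul_le_mul_of_nonneg_left (le_of_lt h3) (inv_nonneg.2 hmpos.le)
        calc -(ε * max ε t0) = (m:ℝ)⁻¹ * (-((m:ℝ) * a)) := by
              rw [hadef]; field_simp
          _ ≤ (m : ℝ)⁻¹ * ((∑ i, Y (θ i ω)) - m * μb) := this
      · have : S - μb = (m : ℝ)⁻¹ * ((∑ i, Y (θ i ω)) - m * μb) := by
          rw [hSdef]
          field_simp
        rw [this]
        have := mul_le_mul_of_nonneg_left (le_of_lt hn1) (inv_nonneg.2 hmpos.le)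
        calc (m : ℝ)⁻¹ * ((∑ i, Y (θ i ω)) - m * μb) ≤ (m:ℝ)⁻¹ * ((m:ℝ) * a) := this
          _ = ε * max ε t0 := by rw [hadef]; field_simp
    exact sqrt_step S t0 ε hS0 ht00 hε hdiff
  have hGc : P Gᶜ ≤ ENNReal.ofReal δ := by
    calc P Gᶜ ≤ P (B1 ∪ B2) := measure_mono hsub
      _ ≤ P B1 + P B2 := measure_union_le _ _
      _ ≤ ENNReal.ofReal (δ / 2) + ENNReal.ofReal (δ / 2) := add_le_add hPB1 hPB2
      _ = ENNReal.ofReal δ := by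
          rw [← ENNReal.ofReal_add (by linarith) (by linarith)]
          norm_num
  have hcompl : P G + P Gᶜ = 1 := by
    have := measure_add_measure_compl (μ := P) hGmeas
    rwa [measure_univ] at this
  have hfinal : ENNReal.ofReal (1 - δ) ≤ P G := by
    have hchain : ENNReal.ofReal (1 - δ) + P Gᶜ ≤ P G + P Gᶜ := by
      calc ENNReal.ofReal (1 - δ) + P Gᶜ
          ≤ ENNReal.ofReal (1 - δ) + ENNReal.ofReal δ := add_le_add_right hGc _
        _ = ENNReal.ofReal 1 := by
            rw [← ENNReal.ofReal_add (by linarith) (by linarith)]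
            norm_num
        _ = 1 := ENNReal.ofReal_one
        _ = P G + P Gᶜ := hcompl.symm
    exact (ENNReal.add_le_add_iff_right (measure_ne_top P Gᶜ)).1 hchain
  exact hfinal
end

section
/- Let U₁, U₂ ∈ ℂ^{N×N} be unitary matrices. Then ∫ |⟨U₁ψ, U₂ψ⟩|² d𝒥(ψ) ≥ 1 − ‖U₁ − U₂‖_{S₂}², where the integral is over ψ on the unit sphere of ℂ^N with respect to the uniform probability measure 𝒥. -/
open Finset Matrix MeasureTheory

set_option linter.unusedSectionVars false
set_option maxHeartbeats 1000000

section aux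

variable {N : ℕ} [MeasurableSpace (EuclideanSpace ℂ (Fin N))]
    [BorelSpace (EuclideanSpace ℂ (Fin N))]
    (𝒥 : Measure (EuclideanSpace ℂ (Fin N))) [IsProbabilityMeasure 𝒥]

private lemma coord_cont (i : Fin N) :
    Continuous fun ψ : EuclideanSpace ℂ (Fin N) => ψ i :=
  (EuclideanSpace.proj i).continuous

private lemma pair_cont (i j : Fin N) :
    Continuous fun ψ : EuclideanSpace ℂ (Fin N) => (starRingEnd ℂ) (ψ i) * ψ j :=
  (RCLike.continuous_conj.comp (coord_cont i)).mul (coord_cont j)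

private lemma coord_norm_le (ψ : EuclideanSpace ℂ (Fin N)) (i : Fin N) :
    ‖ψ i‖ ≤ ‖ψ‖ := by
  rw [EuclideanSpace.norm_eq]
  have h : ‖ψ i‖ ^ 2 ≤ ∑ k, ‖ψ k‖ ^ 2 :=
    Finset.single_le_sum (f := fun k => ‖ψ k‖ ^ 2) (fun k _ => sq_nonneg _) (Finset.mem_univ i)
  calc ‖ψ i‖ = Real.sqrt (‖ψ i‖ ^ 2) := (Real.sqrt_sq (norm_nonneg _)).symm
    _ ≤ _ := Real.sqrt_le_sqrt h

variable {𝒥}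

private lemma pair_integrable (hsphere : ∀ᵐ ψ ∂𝒥, ‖ψ‖ = 1) (i j : Fin N) :
    Integrable (fun ψ : EuclideanSpace ℂ (Fin N) => (starRingEnd ℂ) (ψ i) * ψ j) 𝒥 := by
  refine (integrable_const (1 : ℝ)).mono' (pair_cont i j).aestronglyMeasurable ?_
  filter_upwards [hsphere] with ψ hψ
  have hi := coord_norm_le ψ i
  have hj := coord_norm_le ψ j
  rw [hψ] at hi hj
  calc ‖(starRingEnd ℂ) (ψ i) * ψ j‖ = ‖ψ i‖ * ‖ψ j‖ := by
        rw [norm_mul, RCLike.norm_conj]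
    _ ≤ 1 := by nlinarith [norm_nonneg (ψ i), norm_nonneg (ψ j)]

private lemma moment_off (hinv : ∀ R : EuclideanSpace ℂ (Fin N) ≃ₗᵢ[ℂ] EuclideanSpace ℂ (Fin N),
      Measure.map R 𝒥 = 𝒥) (i j : Fin N) (hij : i ≠ j) :
    ∫ ψ, (starRingEnd ℂ) (ψ i) * ψ j ∂𝒥 = 0 := by
  classical
  set R : EuclideanSpace ℂ (Fin N) ≃ₗᵢ[ℂ] EuclideanSpace ℂ (Fin N) :=
    LinearIsometryEquiv.piLpCongrRight 2
      (fun k => if k = j then LinearIsometryEquiv.neg ℂ else LinearIsometryEquiv.refl ℂ ℂ)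
    with hRdef
  have hR : ∀ (ψ : EuclideanSpace ℂ (Fin N)) (k : Fin N),
      R ψ k = if k = j then -ψ k else ψ k := by
    intro ψ k
    show (if k = j then LinearIsometryEquiv.neg ℂ
      else LinearIsometryEquiv.refl ℂ ℂ) (ψ k) = _
    split_ifs <;> rfl
  have h1 : ∫ ψ, (starRingEnd ℂ) (ψ i) * ψ j ∂𝒥
      = ∫ ψ, (starRingEnd ℂ) ((R ψ) i) * (R ψ) j ∂𝒥 := by
    nth_rewrite 1 [← hinv R]
    exact integral_map R.continuous.measurable.aemeasurable
      (by rw [hinv R]; exact (pair_cont i j).aestronglyMeasurable)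
  have h2 : ∀ ψ : EuclideanSpace ℂ (Fin N),
      (starRingEnd ℂ) ((R ψ) i) * (R ψ) j = -((starRingEnd ℂ) (ψ i) * ψ j) := by
    intro ψ
    rw [hR ψ i, hR ψ j, if_neg hij, if_pos rfl]
    ring
  simp_rw [h2, integral_neg] at h1
  linear_combination h1 / 2

private lemma diag_int (hN : 1 ≤ N) (hsphere : ∀ᵐ ψ ∂𝒥, ‖ψ‖ = 1)
    (hinv : ∀ R : EuclideanSpace ℂ (Fin N) ≃ₗᵢ[ℂ] EuclideanSpace ℂ (Fin N),
      Measure.map R 𝒥 = 𝒥) (i : Fin N) :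
    ∫ ψ, ‖ψ i‖ ^ 2 ∂𝒥 = 1 / N := by
  have hcont : ∀ k : Fin N, Continuous fun ψ : EuclideanSpace ℂ (Fin N) => ‖ψ k‖ ^ 2 :=
    fun k => (coord_cont k).norm.pow 2
  have hint : ∀ k : Fin N, Integrable (fun ψ : EuclideanSpace ℂ (Fin N) => ‖ψ k‖ ^ 2) 𝒥 := by
    intro k
    refine (integrable_const (1 : ℝ)).mono' (hcont k).aestronglyMeasurable ?_
    filter_upwards [hsphere] with ψ hψ
    have h := coord_norm_le ψ k
    rw [hψ] at h
    have h0 := norm_nonneg (ψ k)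
    rw [Real.norm_eq_abs, abs_of_nonneg (sq_nonneg _)]
    nlinarith
  set i0 : Fin N := ⟨0, hN⟩ with hi0
  have hsame : ∀ k : Fin N, ∫ ψ, ‖ψ k‖ ^ 2 ∂𝒥 = ∫ ψ, ‖ψ i0‖ ^ 2 ∂𝒥 := by
    intro k
    set R := LinearIsometryEquiv.piLpCongrLeft 2 ℂ ℂ (Equiv.swap k i0) with hRdef
    have h1 : ∫ ψ, ‖ψ i0‖ ^ 2 ∂𝒥 = ∫ ψ, ‖(R ψ) i0‖ ^ 2 ∂𝒥 := by
      nth_rewrite 1 [← hinv R]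
      exact integral_map R.continuous.measurable.aemeasurable
        (by rw [hinv R]; exact (hcont i0).aestronglyMeasurable)
    have h2 : ∀ ψ : EuclideanSpace ℂ (Fin N), (R ψ) i0 = ψ k := by
      intro ψ
      show ψ ((Equiv.swap k i0).symm i0) = ψ k
      rw [Equiv.symm_swap, Equiv.swap_apply_right]
    rw [h1]
    exact integral_congr_ae (Filter.Eventually.of_forall fun ψ => by simp only [h2])
  have hsum : ∑ k : Fin N, ∫ ψ, ‖ψ k‖ ^ 2 ∂𝒥 = 1 := by
    rw [← integral_finset_sum _ fun k _ => hint k]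
    have hae : ∀ᵐ ψ ∂𝒥, ∑ k : Fin N, ‖ψ k‖ ^ 2 = (1 : ℝ) := by
      filter_upwards [hsphere] with ψ hψ
      have h := (EuclideanSpace.norm_eq ψ).symm.trans hψ
      exact Real.sqrt_eq_one.mp h
    rw [integral_congr_ae hae]
    simp
  have hNpos : (0 : ℝ) < N := by exact_mod_cast hN
  have : (N : ℝ) * ∫ ψ, ‖ψ i0‖ ^ 2 ∂𝒥 = 1 := by
    have := hsum
    rw [Finset.sum_congr rfl (fun k _ => hsame k), Finset.sum_const, Finset.card_univ,
      Fintype.card_fin, nsmul_eq_mul] at this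
    exact this
  rw [hsame i, eq_div_iff (ne_of_gt hNpos)]
  linarith [this, mul_comm (N : ℝ) (∫ ψ, ‖ψ i0‖ ^ 2 ∂𝒥)]

private lemma moment (hN : 1 ≤ N) (hsphere : ∀ᵐ ψ ∂𝒥, ‖ψ‖ = 1)
    (hinv : ∀ R : EuclideanSpace ℂ (Fin N) ≃ₗᵢ[ℂ] EuclideanSpace ℂ (Fin N),
      Measure.map R 𝒥 = 𝒥) (i j : Fin N) :
    ∫ ψ, (starRingEnd ℂ) (ψ i) * ψ j ∂𝒥 = if i = j then (1 : ℂ) / N else 0 := by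
  split_ifs with h
  · subst h
    have hpt : ∀ ψ : EuclideanSpace ℂ (Fin N),
        (starRingEnd ℂ) (ψ i) * ψ i = ((‖ψ i‖ ^ 2 : ℝ) : ℂ) := by
      intro ψ
      rw [mul_comm, Complex.mul_conj, Complex.normSq_eq_norm_sq]
    simp_rw [hpt]
    have hor : ∫ ψ, ((‖ψ i‖ ^ 2 : ℝ) : ℂ) ∂𝒥 = ((∫ ψ, ‖ψ i‖ ^ 2 ∂𝒥 : ℝ) : ℂ) :=
      integral_ofReal
    rw [hor, diag_int hN hsphere hinv i]
    push_cast
    ring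
  · exact moment_off hinv i j h

end aux

/-- Let `U₁, U₂` be unitary and let `𝒥` be the uniform (i.e. rotation
invariant) probability measure on the unit sphere of `ℂ^N`.  Then
`∫ |⟨U₁ψ, U₂ψ⟩|² d𝒥(ψ) ≥ 1 − ‖U₁ − U₂‖_{S₂}²`. -/
theorem stmt_12 (N : ℕ) (hN : 1 ≤ N) (U₁ U₂ : Matrix (Fin N) (Fin N) ℂ)
    (h₁ : U₁ ∈ Matrix.unitaryGroup (Fin N) ℂ)
    (h₂ : U₂ ∈ Matrix.unitaryGroup (Fin N) ℂ)
    [MeasurableSpace (EuclideanSpace ℂ (Fin N))]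
    [BorelSpace (EuclideanSpace ℂ (Fin N))]
    (𝒥 : Measure (EuclideanSpace ℂ (Fin N))) [IsProbabilityMeasure 𝒥]
    (hsphere : ∀ᵐ ψ ∂𝒥, ‖ψ‖ = 1)
    (hinv : ∀ R : EuclideanSpace ℂ (Fin N) ≃ₗᵢ[ℂ] EuclideanSpace ℂ (Fin N),
      Measure.map R 𝒥 = 𝒥) :
    1 - schattenTwo (U₁ - U₂) ^ 2 ≤
      ∫ ψ, ‖∑ j, (starRingEnd ℂ) (U₁.mulVec (fun i => ψ i) j) *
        U₂.mulVec (fun i => ψ i) j‖ ^ 2 ∂𝒥 := by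
  classical
  have hNpos : (0 : ℝ) < N := by exact_mod_cast hN
  set U : Matrix (Fin N) (Fin N) ℂ := U₁ᴴ * U₂ with hU
  set S : EuclideanSpace ℂ (Fin N) → ℂ :=
    fun ψ => ∑ a, ∑ b, U a b * ((starRingEnd ℂ) (ψ a) * ψ b) with hSdef
  have hTS : ∀ ψ : EuclideanSpace ℂ (Fin N),
      (∑ j, (starRingEnd ℂ) (U₁.mulVec (fun i => ψ i) j) * U₂.mulVec (fun i => ψ i) j)
        = S ψ := by
    intro ψ
    simp only [hSdef, hU, Matrix.mulVec, dotProduct, map_sum, _root_.map_mul,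
      Matrix.mul_apply, Matrix.conjTranspose_apply, Finset.sum_mul, Finset.mul_sum,
      starRingEnd_apply]
    conv_rhs => rw [Finset.sum_comm]
    rw [Finset.sum_comm]
    refine Finset.sum_congr rfl fun b _ => ?_
    rw [Finset.sum_comm]
    refine Finset.sum_congr rfl fun a _ => ?_
    refine Finset.sum_congr rfl fun j _ => ?_
    ring
  have hS_int : Integrable S 𝒥 := by
    refine integrable_finset_sum _ fun a _ => integrable_finset_sum _ fun b _ => ?_
    exact (pair_integrable hsphere a b).const_mul (U a b)
  have hS_cont : Continuous S := by
    refine continuous_finset_sum _ fun a _ => continuous_finset_sum _ fun b _ => ?_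
    exact continuous_const.mul (pair_cont a b)
  have habs_int : Integrable (fun ψ => ‖S ψ‖ ^ 2) 𝒥 := by
    set C : ℝ := ∑ a : Fin N, ∑ b : Fin N, ‖U a b‖ with hC
    refine (integrable_const (C ^ 2)).mono'
      (hS_cont.norm.pow 2).aestronglyMeasurable ?_
    filter_upwards [hsphere] with ψ hψ
    have hb : ‖S ψ‖ ≤ C := by
      refine le_trans (norm_sum_le _ _) ?_
      refine Finset.sum_le_sum fun a _ => le_trans (norm_sum_le _ _) ?_
      refine Finset.sum_le_sum fun b _ => ?_
      have h1 := coord_norm_le ψ a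
      have h2 := coord_norm_le ψ b
      rw [hψ] at h1 h2
      rw [norm_mul, norm_mul]
      have h3 : ‖(starRingEnd ℂ) (ψ a)‖ = ‖ψ a‖ := by
        rw [RCLike.norm_conj]
      rw [h3]
      have hUnn := norm_nonneg (U a b)
      have hx : ‖ψ a‖ * ‖ψ b‖ ≤ 1 := by nlinarith [norm_nonneg (ψ a), norm_nonneg (ψ b)]
      nlinarith [hx, mul_le_mul_of_nonneg_left hx hUnn]
    have h0 := norm_nonneg (S ψ)
    have hC0 : 0 ≤ C := le_trans h0 hb
    rw [Real.norm_eq_abs, abs_of_nonneg (sq_nonneg _)]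
    nlinarith
  have hIS : ∫ ψ, S ψ ∂𝒥 = U.trace / N := by
    rw [hSdef]
    rw [integral_finset_sum _ fun a _ =>
      integrable_finset_sum _ fun b _ => (pair_integrable hsphere a b).const_mul (U a b)]
    have hrow : ∀ a : Fin N,
        ∫ ψ, ∑ b, U a b * ((starRingEnd ℂ) (ψ a) * ψ b) ∂𝒥
          = ∑ b, U a b * (if a = b then (1 : ℂ) / N else 0) := by
      intro a
      rw [integral_finset_sum _ fun b _ => (pair_integrable hsphere a b).const_mul (U a b)]
      refine Finset.sum_congr rfl fun b _ => ?_
      rw [integral_const_mul, moment hN hsphere hinv a b]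
    simp_rw [hrow]
    simp only [mul_ite, mul_zero, Finset.sum_ite_eq, Finset.mem_univ, if_true]
    simp only [Matrix.trace, Matrix.diag_apply, mul_one_div, Finset.sum_div]
  have hRe : ∫ ψ, (S ψ).re ∂𝒥 = U.trace.re / N := by
    have h := integral_re hS_int
    simp only [RCLike.re_to_complex] at h
    rw [h, hIS]
    have hcast : ((N : ℂ)) = ((N : ℝ) : ℂ) := by push_cast; ring
    rw [hcast, Complex.div_ofReal_re]
  have hpt : ∀ ψ : EuclideanSpace ℂ (Fin N),
      2 * (S ψ).re - 1 ≤ ‖S ψ‖ ^ 2 := by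
    intro ψ
    have h1 := Complex.abs_re_le_norm (S ψ)
    have h2 := norm_nonneg (S ψ)
    nlinarith [sq_nonneg ((S ψ).re - 1), abs_nonneg (S ψ).re, sq_abs (S ψ).re]
  have hre_int : Integrable (fun ψ : EuclideanSpace ℂ (Fin N) => (S ψ).re) 𝒥 := hS_int.re
  have hlhs_int : Integrable (fun ψ => 2 * (S ψ).re - 1) 𝒥 :=
    (hre_int.const_mul 2).sub (integrable_const 1)
  have hmono : ∫ ψ, (2 * (S ψ).re - 1) ∂𝒥 ≤ ∫ ψ, ‖S ψ‖ ^ 2 ∂𝒥 :=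
    integral_mono hlhs_int habs_int hpt
  have hlhs_val : ∫ ψ, (2 * (S ψ).re - 1) ∂𝒥 = 2 * U.trace.re / N - 1 := by
    rw [integral_sub (hre_int.const_mul 2) (integrable_const 1), integral_const]
    simp only [measure_univ, probReal_univ, ENNReal.toReal_one, smul_eq_mul, one_mul]
    rw [integral_const_mul, hRe]
    ring
  -- unitarity and trace algebra
  have e₁ : U₁ * U₁ᴴ = 1 := by
    have h := Matrix.mem_unitaryGroup_iff.mp h₁
    rwa [Matrix.star_eq_conjTranspose] at h
  have e₂ : U₂ * U₂ᴴ = 1 := by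
    have h := Matrix.mem_unitaryGroup_iff.mp h₂
    rwa [Matrix.star_eq_conjTranspose] at h
  have htr1 : Matrix.trace (U₂ * U₁ᴴ) = U.trace := by
    rw [hU, Matrix.trace_mul_comm]
  have htr2 : (Matrix.trace (U₁ * U₂ᴴ)).re = U.trace.re := by
    have hconj : U₁ * U₂ᴴ = (U₂ * U₁ᴴ)ᴴ := by
      rw [Matrix.conjTranspose_mul, Matrix.conjTranspose_conjTranspose]
    rw [hconj, Matrix.trace_conjTranspose, htr1]
    simp [Complex.star_def]
  have hexp : (U₁ - U₂) * (U₁ - U₂)ᴴ = 1 + 1 - (U₁ * U₂ᴴ + U₂ * U₁ᴴ) := by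
    rw [Matrix.conjTranspose_sub]
    have h1 : (U₁ - U₂) * (U₁ᴴ - U₂ᴴ)
        = U₁ * U₁ᴴ + U₂ * U₂ᴴ - (U₁ * U₂ᴴ + U₂ * U₁ᴴ) := by noncomm_ring
    rw [h1, e₁, e₂]
  have hre : ((U₁ - U₂) * (U₁ - U₂)ᴴ).trace.re = 2 * N - 2 * U.trace.re := by
    rw [hexp]
    rw [Matrix.trace_sub, Matrix.trace_add, Matrix.trace_add, Matrix.trace_one]
    rw [Complex.sub_re, Complex.add_re, Complex.add_re, htr2]
    have : (Matrix.trace (U₂ * U₁ᴴ)).re = U.trace.re := by rw [htr1]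
    rw [this]
    simp [Fintype.card_fin]
    ring
  have hnn : 0 ≤ ((U₁ - U₂) * (U₁ - U₂)ᴴ).trace.re := by
    rw [Matrix.trace]
    simp only [Matrix.diag_apply, Matrix.mul_apply, Matrix.conjTranspose_apply]
    rw [Complex.re_sum]
    refine Finset.sum_nonneg fun i _ => ?_
    rw [Complex.re_sum]
    refine Finset.sum_nonneg fun j _ => ?_
    have : (U₁ - U₂) i j * star ((U₁ - U₂) i j)
        = ((Complex.normSq ((U₁ - U₂) i j) : ℝ) : ℂ) := by
      rw [RCLike.star_def, Complex.mul_conj]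
    rw [this, Complex.ofReal_re]
    exact Complex.normSq_nonneg _
  have hschat : 1 - schattenTwo (U₁ - U₂) ^ 2 = 2 * U.trace.re / N - 1 := by
    rw [schattenTwo, Real.sq_sqrt (div_nonneg hnn (le_of_lt hNpos)), hre]
    field_simp
    ring
  simp only [hTS]
  calc 1 - schattenTwo (U₁ - U₂) ^ 2 = 2 * U.trace.re / N - 1 := hschat
    _ = ∫ ψ, (2 * (S ψ).re - 1) ∂𝒥 := hlhs_val.symm
    _ ≤ ∫ ψ, ‖S ψ‖ ^ 2 ∂𝒥 := hmono
end

section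
/- Lemma 3: Let U₁, U₂ ∈ ℂ^{N×N} be unitary matrices, let ε > 0 and 0 < δ < 1. If ‖U₁ − U₂‖_{S₂} ≤ ε / (1 + √(2·(1/δ − 1))), then U₁ and U₂ are pure-state (ε, δ)-similar, i.e., 𝒥( { ψ : ‖ψ‖ = 1 and |⟨U₁ψ, U₂ψ⟩|² ≥ 1 − ε } ) ≥ 1 − δ. -/
open Finset Matrix MeasureTheory

section StmtAux

set_option linter.unusedSectionVars false

variable {N : ℕ} [MeasurableSpace (EuclideanSpace ℂ (Fin N))]
  [BorelSpace (EuclideanSpace ℂ (Fin N))]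
  (𝒥 : Measure (EuclideanSpace ℂ (Fin N))) [IsProbabilityMeasure 𝒥]

private lemma my_cont_coord (a : Fin N) :
    Continuous fun ψ : EuclideanSpace ℂ (Fin N) => ψ a :=
  (EuclideanSpace.proj a).continuous

private lemma my_coord_le (ψ : EuclideanSpace ℂ (Fin N)) (a : Fin N) : ‖ψ a‖ ≤ ‖ψ‖ := by
  rw [EuclideanSpace.norm_eq]
  calc ‖ψ a‖ = Real.sqrt (‖ψ a‖ ^ 2) := (Real.sqrt_sq (norm_nonneg _)).symm
    _ ≤ _ := Real.sqrt_le_sqrt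
        (Finset.single_le_sum (fun i _ => sq_nonneg ‖ψ i‖) (Finset.mem_univ a))

private lemma my_sum_one (ψ : EuclideanSpace ℂ (Fin N)) (hψ : ‖ψ‖ = 1) :
    ∑ a, (starRingEnd ℂ) (ψ a) * ψ a = 1 := by
  have hnorm : ∑ i, ‖ψ i‖ ^ 2 = 1 := by
    have h := EuclideanSpace.norm_eq ψ
    rw [hψ] at h
    have h0 : ∀ i ∈ Finset.univ, (0:ℝ) ≤ ‖ψ i‖ ^ 2 := fun i _ => sq_nonneg _
    nlinarith [Real.sq_sqrt (Finset.sum_nonneg h0), h]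
  calc ∑ a, (starRingEnd ℂ) (ψ a) * ψ a = ∑ a, ((‖ψ a‖ ^ 2 : ℝ) : ℂ) := by
        refine Finset.sum_congr rfl fun d _ => ?_
        rw [mul_comm, Complex.mul_conj, Complex.normSq_eq_norm_sq]
    _ = 1 := by rw [← Complex.ofReal_sum, hnorm]; simp

private lemma my_integrable (hsphere : ∀ᵐ ψ ∂𝒥, ‖ψ‖ = 1) (a b : Fin N) :
    Integrable (fun ψ : EuclideanSpace ℂ (Fin N) => (starRingEnd ℂ) (ψ a) * ψ b) 𝒥 := by
  refine Integrable.mono' (integrable_const 1) ?_ ?_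
  · exact ((Complex.continuous_conj.comp (my_cont_coord a)).mul
      (my_cont_coord b)).aestronglyMeasurable
  · filter_upwards [hsphere] with ψ hψ
    have ha := my_coord_le ψ a
    have hb := my_coord_le ψ b
    rw [hψ] at ha hb
    calc ‖(starRingEnd ℂ) (ψ a) * ψ b‖ = ‖ψ a‖ * ‖ψ b‖ := by
          rw [norm_mul, RCLike.norm_conj]
      _ ≤ 1 := by nlinarith [norm_nonneg (ψ a), norm_nonneg (ψ b)]

private lemma my_integral_comp
    (hinv : ∀ R : EuclideanSpace ℂ (Fin N) ≃ₗᵢ[ℂ] EuclideanSpace ℂ (Fin N),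
      Measure.map R 𝒥 = 𝒥)
    (R : EuclideanSpace ℂ (Fin N) ≃ₗᵢ[ℂ] EuclideanSpace ℂ (Fin N))
    {f : EuclideanSpace ℂ (Fin N) → ℂ} (hf : Continuous f) :
    ∫ ψ, f (R ψ) ∂𝒥 = ∫ ψ, f ψ ∂𝒥 := by
  conv_rhs => rw [← hinv R]
  rw [integral_map R.continuous.measurable.aemeasurable hf.aestronglyMeasurable]

private lemma my_moment
    (hsphere : ∀ᵐ ψ ∂𝒥, ‖ψ‖ = 1)
    (hinv : ∀ R : EuclideanSpace ℂ (Fin N) ≃ₗᵢ[ℂ] EuclideanSpace ℂ (Fin N),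
      Measure.map R 𝒥 = 𝒥)
    (a b : Fin N) :
    ∫ ψ : EuclideanSpace ℂ (Fin N), (starRingEnd ℂ) (ψ a) * ψ b ∂𝒥
      = if a = b then ((N : ℂ))⁻¹ else 0 := by
  have hcont : ∀ a b : Fin N,
      Continuous fun ψ : EuclideanSpace ℂ (Fin N) => (starRingEnd ℂ) (ψ a) * ψ b :=
    fun a b => (Complex.continuous_conj.comp (my_cont_coord a)).mul (my_cont_coord b)
  by_cases hab : a = b
  · subst hab
    simp only [if_pos rfl]
    have hswap : ∀ c d : Fin N,
        (∫ ψ : EuclideanSpace ℂ (Fin N), (starRingEnd ℂ) (ψ c) * ψ c ∂𝒥)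
          = ∫ ψ : EuclideanSpace ℂ (Fin N), (starRingEnd ℂ) (ψ d) * ψ d ∂𝒥 := by
      intro c d
      have h := my_integral_comp 𝒥 hinv
        (LinearIsometryEquiv.piLpCongrLeft 2 ℂ ℂ (Equiv.swap c d)) (hcont c c)
      rw [← h]
      congr 1
      ext ψ
      congr 1 <;>
      · simp only [LinearIsometryEquiv.piLpCongrLeft_apply, Equiv.piCongrLeft'_apply,
          Equiv.symm_swap]
        rw [Equiv.swap_apply_left]
    have hsum : ∑ d : Fin N,
        (∫ ψ : EuclideanSpace ℂ (Fin N), (starRingEnd ℂ) (ψ d) * ψ d ∂𝒥) = 1 := by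
      rw [← integral_finset_sum _ (fun d _ => my_integrable 𝒥 hsphere d d)]
      have h1 : ∫ ψ : EuclideanSpace ℂ (Fin N), (1 : ℂ) ∂𝒥 = 1 := by simp
      rw [← h1]
      apply integral_congr_ae
      filter_upwards [hsphere] with ψ hψ
      exact my_sum_one ψ hψ
    have hN0 : (N : ℂ) ≠ 0 := by
      have : 0 < N := a.pos
      exact_mod_cast this.ne'
    have hmul : (N : ℂ) * (∫ ψ : EuclideanSpace ℂ (Fin N),
        (starRingEnd ℂ) (ψ a) * ψ a ∂𝒥) = 1 := by
      rw [← hsum, Finset.sum_congr rfl fun d _ => (hswap d a)]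
      simp [mul_comm]
    rw [if_pos trivial]
    field_simp
    linear_combination hmul
  · simp only [if_neg hab]
    have h := my_integral_comp 𝒥 hinv
      (LinearIsometryEquiv.piLpCongrRight 2
        (fun i : Fin N => if i = a then LinearIsometryEquiv.neg ℂ (E := ℂ)
          else LinearIsometryEquiv.refl ℂ ℂ)) (hcont a b)
    have hneg : ∀ ψ : EuclideanSpace ℂ (Fin N),
        ((LinearIsometryEquiv.piLpCongrRight 2
          (fun i : Fin N => if i = a then LinearIsometryEquiv.neg ℂ (E := ℂ)
            else LinearIsometryEquiv.refl ℂ ℂ)) ψ : EuclideanSpace ℂ (Fin N)) a = -ψ a ∧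
        ((LinearIsometryEquiv.piLpCongrRight 2
          (fun i : Fin N => if i = a then LinearIsometryEquiv.neg ℂ (E := ℂ)
            else LinearIsometryEquiv.refl ℂ ℂ)) ψ : EuclideanSpace ℂ (Fin N)) b = ψ b := by
      intro ψ
      constructor <;> simp [LinearIsometryEquiv.piLpCongrRight_apply, hab, Ne.symm hab]
    have h2 : (∫ ψ : EuclideanSpace ℂ (Fin N), (starRingEnd ℂ) (ψ a) * ψ b ∂𝒥)
        = -∫ ψ : EuclideanSpace ℂ (Fin N), (starRingEnd ℂ) (ψ a) * ψ b ∂𝒥 := by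
      conv_lhs => rw [← h]
      rw [← integral_neg]
      congr 1
      ext ψ
      rw [(hneg ψ).1, (hneg ψ).2]
      simp
    linear_combination h2 / 2

private lemma sum3_comm (f : Fin N → Fin N → Fin N → ℂ) :
    ∑ j, ∑ b, ∑ a, f j b a = ∑ a, ∑ b, ∑ j, f j b a := by
  conv_lhs => rw [Finset.sum_comm]
  conv_lhs => rw [Finset.sum_congr rfl fun b (_ : b ∈ Finset.univ) =>
    (Finset.sum_comm (s := Finset.univ) (t := Finset.univ) (f := fun j a => f j b a))]
  conv_lhs => rw [Finset.sum_comm]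

private lemma my_expand (A B : Matrix (Fin N) (Fin N) ℂ) (ψ : Fin N → ℂ) :
    ∑ j, (starRingEnd ℂ) (A.mulVec ψ j) * B.mulVec ψ j
      = ∑ a, ∑ b, (Aᴴ * B) a b * ((starRingEnd ℂ) (ψ a) * ψ b) := by
  simp only [Matrix.mulVec, dotProduct, map_sum, _root_.map_mul, Matrix.mul_apply,
    Matrix.conjTranspose_apply, Finset.sum_mul, Finset.mul_sum]
  rw [sum3_comm]
  refine Finset.sum_congr rfl fun a _ => Finset.sum_congr rfl fun b _ =>
    Finset.sum_congr rfl fun j _ => ?_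
  simp only [starRingEnd_apply]
  ring

private lemma my_integral_expand
    (hsphere : ∀ᵐ ψ ∂𝒥, ‖ψ‖ = 1)
    (hinv : ∀ R : EuclideanSpace ℂ (Fin N) ≃ₗᵢ[ℂ] EuclideanSpace ℂ (Fin N),
      Measure.map R 𝒥 = 𝒥)
    (M : Matrix (Fin N) (Fin N) ℂ) :
    ∫ ψ : EuclideanSpace ℂ (Fin N),
        (∑ a, ∑ b, M a b * ((starRingEnd ℂ) (ψ a) * ψ b)) ∂𝒥
      = ((N : ℂ))⁻¹ * M.trace := by
  refine (integral_finset_sum _ (fun a _ => integrable_finset_sum _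
    (fun b _ => (my_integrable 𝒥 hsphere a b).const_mul _))).trans ?_
  have step : ∀ a : Fin N,
      ∫ ψ : EuclideanSpace ℂ (Fin N), (∑ b, M a b * ((starRingEnd ℂ) (ψ a) * ψ b)) ∂𝒥
        = M a a * ((N : ℂ))⁻¹ := by
    intro a
    refine (integral_finset_sum _ (fun b _ => (my_integrable 𝒥 hsphere a b).const_mul _)).trans ?_
    have : ∀ b : Fin N,
        ∫ ψ : EuclideanSpace ℂ (Fin N), M a b * ((starRingEnd ℂ) (ψ a) * ψ b) ∂𝒥
          = M a b * if a = b then ((N : ℂ))⁻¹ else 0 := by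
      intro b
      rw [integral_const_mul, my_moment 𝒥 hsphere hinv a b]
    rw [Finset.sum_congr rfl fun b _ => this b]
    simp [mul_ite]
  rw [Finset.sum_congr rfl fun a _ => step a]
  rw [Matrix.trace]
  simp [Matrix.diag, Finset.mul_sum, mul_comm]

end StmtAux

/-- **Lemma 3.** Let `U₁, U₂` be unitary, `ε > 0`, `0 < δ < 1`, and let `𝒥`
be the uniform (rotation invariant) probability measure on the unit sphere of `ℂ^N`.  If
`‖U₁ − U₂‖_{S₂} ≤ ε/(1 + √(2(1/δ − 1)))` then `U₁, U₂` are pure-state `(ε,δ)`-similar: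
`𝒥({ψ : ‖ψ‖ = 1 and |⟨U₁ψ, U₂ψ⟩|² ≥ 1 − ε}) ≥ 1 − δ`. -/
theorem stmt_15 (N : ℕ) (hN : 1 ≤ N) (U₁ U₂ : Matrix (Fin N) (Fin N) ℂ)
    (h₁ : U₁ ∈ Matrix.unitaryGroup (Fin N) ℂ)
    (h₂ : U₂ ∈ Matrix.unitaryGroup (Fin N) ℂ)
    [MeasurableSpace (EuclideanSpace ℂ (Fin N))]
    [BorelSpace (EuclideanSpace ℂ (Fin N))]
    (𝒥 : Measure (EuclideanSpace ℂ (Fin N))) [IsProbabilityMeasure 𝒥]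
    (hsphere : ∀ᵐ ψ ∂𝒥, ‖ψ‖ = 1)
    (hinv : ∀ R : EuclideanSpace ℂ (Fin N) ≃ₗᵢ[ℂ] EuclideanSpace ℂ (Fin N),
      Measure.map R 𝒥 = 𝒥)
    (ε δ : ℝ) (hε : 0 < ε) (hδ : δ ∈ Set.Ioo (0 : ℝ) 1)
    (hS2 : schattenTwo (U₁ - U₂) ≤ ε / (1 + Real.sqrt (2 * (1 / δ - 1)))) :
    ENNReal.ofReal (1 - δ) ≤
      𝒥 {ψ | ‖ψ‖ = 1 ∧
        1 - ε ≤ ‖∑ j, (starRingEnd ℂ) (U₁.mulVec (fun i => ψ i) j) *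
          U₂.mulVec (fun i => ψ i) j‖ ^ 2} := by
  obtain ⟨hδ0, hδ1⟩ := hδ
  have hNpos : 0 < N := hN
  set Δ : Matrix (Fin N) (Fin N) ℂ := U₁ - U₂ with hΔdef
  have e1 : U₁ᴴ * U₁ = 1 := by
    have h := h₁.1
    simpa [Matrix.star_eq_conjTranspose] using h
  have e2 : U₂ᴴ * U₂ = 1 := by
    have h := h₂.1
    simpa [Matrix.star_eq_conjTranspose] using h
  have hΔΔ : Δᴴ * Δ = 1 + 1 - U₁ᴴ * U₂ - U₂ᴴ * U₁ := by
    simp only [hΔdef, Matrix.conjTranspose_sub, Matrix.sub_mul, Matrix.mul_sub, e1, e2]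
    abel
  set S : EuclideanSpace ℂ (Fin N) → ℂ := fun ψ =>
    ∑ j, (starRingEnd ℂ) (U₁.mulVec (fun i => ψ i) j) * U₂.mulVec (fun i => ψ i) j with hSdef
  set F : EuclideanSpace ℂ (Fin N) → ℂ := fun ψ =>
    ∑ j, (starRingEnd ℂ) (Δ.mulVec (fun i => ψ i) j) * Δ.mulVec (fun i => ψ i) j with hFdef
  set g : EuclideanSpace ℂ (Fin N) → ℝ := fun ψ =>
    ∑ j, Complex.normSq (Δ.mulVec (fun i => ψ i) j) with hgdef
  have hFg : ∀ ψ, F ψ = ((g ψ : ℝ) : ℂ) := by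
    intro ψ
    rw [hFdef, hgdef]
    push_cast
    refine Finset.sum_congr rfl fun j _ => ?_
    rw [mul_comm, Complex.mul_conj]
  have hg0 : ∀ ψ, 0 ≤ g ψ := fun ψ => Finset.sum_nonneg fun j _ => Complex.normSq_nonneg _
  have hgcont : Continuous g := by
    rw [hgdef]
    simp only [Matrix.mulVec, dotProduct]
    exact continuous_finset_sum _ fun j _ => Complex.continuous_normSq.comp
      (continuous_finset_sum _ fun a _ => continuous_const.mul (my_cont_coord a))
  have hFexp : ∀ ψ : EuclideanSpace ℂ (Fin N),
      F ψ = ∑ a, ∑ b, (Δᴴ * Δ) a b * ((starRingEnd ℂ) (ψ a) * ψ b) :=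
    fun ψ => my_expand Δ Δ (fun i => ψ i)
  have hFint : Integrable F 𝒥 := by
    have hint : Integrable (fun ψ : EuclideanSpace ℂ (Fin N) =>
        ∑ a, ∑ b, (Δᴴ * Δ) a b * ((starRingEnd ℂ) (ψ a) * ψ b)) 𝒥 :=
      integrable_finset_sum _ fun a _ => integrable_finset_sum _
        fun b _ => (my_integrable 𝒥 hsphere a b).const_mul _
    refine hint.congr ?_
    exact ae_of_all _ fun ψ => (hFexp ψ).symm
  have hgint : Integrable g 𝒥 := by
    refine hFint.re.congr (ae_of_all _ fun ψ => ?_)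
    show RCLike.re (F ψ) = g ψ
    rw [hFg ψ, RCLike.re_to_complex, Complex.ofReal_re]
  have hFI : ∫ ψ, F ψ ∂𝒥 = ((N : ℂ))⁻¹ * (Δᴴ * Δ).trace := by
    rw [integral_congr_ae (ae_of_all _ hFexp)]
    exact my_integral_expand 𝒥 hsphere hinv _
  have hgI : ∫ ψ, g ψ ∂𝒥 = (((N : ℂ))⁻¹ * (Δᴴ * Δ).trace).re := by
    have h : ((∫ ψ, g ψ ∂𝒥 : ℝ) : ℂ) = ∫ ψ, F ψ ∂𝒥 := by
      rw [show (∫ ψ, F ψ ∂𝒥) = ∫ ψ, ((g ψ : ℝ) : ℂ) ∂𝒥 from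
        integral_congr_ae (ae_of_all _ hFg)]
      exact (integral_ofReal (𝕜 := ℂ) (f := g)).symm
    rw [← hFI, ← h, Complex.ofReal_re]
  have htrval : (Δᴴ * Δ).trace = ((∑ i, ∑ j, Complex.normSq (Δ j i) : ℝ) : ℂ) := by
    rw [Matrix.trace]
    push_cast
    refine Finset.sum_congr rfl fun i _ => ?_
    rw [Matrix.diag_apply, Matrix.mul_apply]
    refine Finset.sum_congr rfl fun j _ => ?_
    rw [Matrix.conjTranspose_apply, mul_comm, ← starRingEnd_apply, Complex.mul_conj]
  have htrval2 : (Δ * Δᴴ).trace = ((∑ i, ∑ j, Complex.normSq (Δ i j) : ℝ) : ℂ) := by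
    rw [Matrix.trace]
    push_cast
    refine Finset.sum_congr rfl fun i _ => ?_
    rw [Matrix.diag_apply, Matrix.mul_apply]
    refine Finset.sum_congr rfl fun j _ => ?_
    rw [Matrix.conjTranspose_apply, ← starRingEnd_apply, Complex.mul_conj]
  have hgIval : ∫ ψ, g ψ ∂𝒥 = (∑ i, ∑ j, Complex.normSq (Δ j i)) / N := by
    rw [hgI, htrval]
    rw [show ((N : ℂ))⁻¹ = (((N : ℝ)⁻¹ : ℝ) : ℂ) by push_cast; ring]
    rw [← Complex.ofReal_mul, Complex.ofReal_re]
    ring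
  have hs2 : schattenTwo Δ ^ 2 = ∫ ψ, g ψ ∂𝒥 := by
    rw [schattenTwo, hgIval, htrval2, Complex.ofReal_re]
    rw [Real.sq_sqrt (div_nonneg (Finset.sum_nonneg fun i _ =>
      Finset.sum_nonneg fun j _ => Complex.normSq_nonneg (Δ i j)) (Nat.cast_nonneg N))]
    rw [Finset.sum_comm]
  have hMark := mul_meas_ge_le_integral_of_nonneg (ae_of_all 𝒥 hg0) hgint ε
  have hconjS : ∀ ψ : EuclideanSpace ℂ (Fin N),
      (starRingEnd ℂ) (S ψ) = ∑ a, ∑ b, (U₂ᴴ * U₁) a b * ((starRingEnd ℂ) (ψ a) * ψ b) := by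
    intro ψ
    have h1 : (starRingEnd ℂ) (S ψ)
        = ∑ j, (starRingEnd ℂ) (U₂.mulVec (fun i => ψ i) j) * U₁.mulVec (fun i => ψ i) j := by
      rw [hSdef, map_sum]
      refine Finset.sum_congr rfl fun j _ => ?_
      rw [_root_.map_mul, Complex.conj_conj, mul_comm]
    rw [h1, my_expand]
  have hSexp : ∀ ψ : EuclideanSpace ℂ (Fin N),
      S ψ = ∑ a, ∑ b, (U₁ᴴ * U₂) a b * ((starRingEnd ℂ) (ψ a) * ψ b) :=
    fun ψ => my_expand U₁ U₂ (fun i => ψ i)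
  have hgS : ∀ ψ : EuclideanSpace ℂ (Fin N), ‖ψ‖ = 1 →
      ((g ψ : ℝ) : ℂ) = 2 - S ψ - (starRingEnd ℂ) (S ψ) := by
    intro ψ hψ
    rw [← hFg ψ, hFexp ψ, hΔΔ, hconjS, hSexp]
    have hone : ∑ a, ∑ b, ((1 : Matrix (Fin N) (Fin N) ℂ)) a b
        * ((starRingEnd ℂ) (ψ a) * ψ b) = 1 := by
      have h : ∀ a : Fin N, ∑ b, ((1 : Matrix (Fin N) (Fin N) ℂ)) a b
          * ((starRingEnd ℂ) (ψ a) * ψ b) = (starRingEnd ℂ) (ψ a) * ψ a := by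
        intro a
        simp [Matrix.one_apply, ite_mul, Finset.sum_ite_eq]
      rw [Finset.sum_congr rfl fun a _ => h a]
      exact my_sum_one ψ hψ
    simp only [Matrix.sub_apply, Matrix.add_apply, sub_mul, add_mul,
      Finset.sum_sub_distrib, Finset.sum_add_distrib]
    rw [hone]
    ring
  have hSre : ∀ ψ : EuclideanSpace ℂ (Fin N), ‖ψ‖ = 1 → (S ψ).re = 1 - g ψ / 2 := by
    intro ψ hψ
    have h := congrArg Complex.re (hgS ψ hψ)
    simp only [Complex.ofReal_re, Complex.sub_re, Complex.conj_re] at h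
    norm_num at h
    linarith
  have hbound : ∀ ψ : EuclideanSpace ℂ (Fin N), ‖ψ‖ = 1 → g ψ ≤ ε →
      1 - ε ≤ ‖S ψ‖ ^ 2 := by
    intro ψ hψ hgε
    have h1 := hSre ψ hψ
    have h2 : |(S ψ).re| ≤ ‖S ψ‖ := Complex.abs_re_le_norm _
    have h3 : (S ψ).re ^ 2 ≤ ‖S ψ‖ ^ 2 := by
      nlinarith [abs_nonneg (S ψ).re, sq_abs (S ψ).re, norm_nonneg (S ψ)]
    rw [h1] at h3
    nlinarith [hg0 ψ, sq_nonneg (g ψ)]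
  set bad : Set (EuclideanSpace ℂ (Fin N)) := {ψ | ε ≤ g ψ} with hbaddef
  have hbadmeas : MeasurableSet bad := measurableSet_le measurable_const hgcont.measurable
  have hsphere0 : 𝒥 {ψ : EuclideanSpace ℂ (Fin N) | ‖ψ‖ = 1}ᶜ = 0 := by
    rw [Set.compl_setOf]
    exact ae_iff.mp hsphere
  rcases le_or_gt ε 1 with hε1 | hε1
  · set r := Real.sqrt (2 * (1 / δ - 1)) with hrdef
    have hr0 : 0 ≤ r := Real.sqrt_nonneg _
    have hδinv : 1 ≤ 1 / δ := by rw [le_div_iff₀ hδ0]; linarith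
    have hrsq : r ^ 2 = 2 * (1 / δ - 1) := by
      rw [hrdef, Real.sq_sqrt (by linarith)]
    have hδr2 : δ * r ^ 2 = 2 - 2 * δ := by
      rw [hrsq]
      field_simp
    have hkey : ε ≤ δ * (1 + r) ^ 2 := by
      nlinarith [mul_nonneg hδ0.le hr0]
    have hs0 : 0 ≤ schattenTwo Δ := Real.sqrt_nonneg _
    have h1r : (0 : ℝ) < 1 + r := by linarith
    have hsεδ : schattenTwo Δ ^ 2 ≤ ε * δ := by
      have h4 : schattenTwo Δ ^ 2 ≤ (ε / (1 + r)) ^ 2 := pow_le_pow_left₀ hs0 hS2 2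
      have h5 : (ε / (1 + r)) ^ 2 ≤ ε * δ := by
        rw [div_pow, div_le_iff₀ (by positivity)]
        nlinarith [hkey, hε.le]
      linarith
    have htR : (𝒥 bad).toReal ≤ δ := by
      have h6 : ε * (𝒥 bad).toReal ≤ ε * δ := by
        calc ε * (𝒥 bad).toReal ≤ ∫ ψ, g ψ ∂𝒥 := hMark
          _ = schattenTwo Δ ^ 2 := hs2.symm
          _ ≤ ε * δ := hsεδ
      exact le_of_mul_le_mul_left h6 hε
    have hbadle : 𝒥 bad ≤ ENNReal.ofReal δ := by
      rw [← ENNReal.ofReal_toReal (measure_ne_top 𝒥 bad)]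
      exact ENNReal.ofReal_le_ofReal htR
    have hcompl : ENNReal.ofReal (1 - δ) ≤ 𝒥 badᶜ := by
      rw [prob_compl_eq_one_sub hbadmeas]
      rw [show ENNReal.ofReal (1 - δ) = 1 - ENNReal.ofReal δ by
        rw [ENNReal.ofReal_sub _ hδ0.le, ENNReal.ofReal_one]]
      exact tsub_le_tsub_left hbadle 1
    have hsub : badᶜ ∩ {ψ : EuclideanSpace ℂ (Fin N) | ‖ψ‖ = 1} ⊆
        {ψ : EuclideanSpace ℂ (Fin N) | ‖ψ‖ = 1 ∧ 1 - ε ≤ ‖S ψ‖ ^ 2} := by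
      rintro ψ ⟨hψb, hψn⟩
      exact ⟨hψn, hbound ψ hψn (le_of_not_ge hψb)⟩
    calc ENNReal.ofReal (1 - δ) ≤ 𝒥 badᶜ := hcompl
      _ = 𝒥 (badᶜ ∩ {ψ : EuclideanSpace ℂ (Fin N) | ‖ψ‖ = 1}) :=
        (measure_inter_conull hsphere0).symm
      _ ≤ _ := measure_mono hsub
  · have hsub : {ψ : EuclideanSpace ℂ (Fin N) | ‖ψ‖ = 1} ⊆
        {ψ : EuclideanSpace ℂ (Fin N) | ‖ψ‖ = 1 ∧ 1 - ε ≤ ‖S ψ‖ ^ 2} := by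
      intro ψ hψ
      refine ⟨hψ, ?_⟩
      have h := sq_nonneg (‖S ψ‖)
      linarith
    have hm : MeasurableSet {ψ : EuclideanSpace ℂ (Fin N) | ‖ψ‖ = 1} :=
      continuous_norm.measurable (measurableSet_singleton 1)
    have h1 : 𝒥 {ψ : EuclideanSpace ℂ (Fin N) | ‖ψ‖ = 1} = 1 := by
      have h2 := prob_compl_eq_one_sub (μ := 𝒥) hm
      rw [hsphere0] at h2
      have h3 : (1 : ENNReal) ≤ 𝒥 {ψ : EuclideanSpace ℂ (Fin N) | ‖ψ‖ = 1} := by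
        rwa [eq_comm, tsub_eq_zero_iff_le] at h2
      exact le_antisymm prob_le_one h3
    calc ENNReal.ofReal (1 - δ) ≤ 1 := ENNReal.ofReal_le_one.mpr (by linarith)
      _ = 𝒥 {ψ : EuclideanSpace ℂ (Fin N) | ‖ψ‖ = 1} := h1.symm
      _ ≤ _ := measure_mono hsub
end
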